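/- Let F be an intersecting family all of whose members have size at most 3, and let C be the downset generated by F. Then there exists a vertex a of C such that |F| ≤ |st_C(a)|. -/

import Mathlib

namespace SterboulProof

variable {α : Type*} [DecidableEq α]

/-- Decompose a 3-element set containing two given distinct elements. -/
lemma third {B : Finset α} {u v : α} (hB : B.card = 3) (hu : u ∈ B) (hv : v ∈ B)
    (huv : u ≠ v) : ∃ w, w ≠ u ∧ w ≠ v ∧ B = {u, v, w} := by
  have h1 : ((B.erase u).erase v).card = 1 := by
    rw [Finset.card_erase_of_mem (Finset.mem_erase.2 ⟨Ne.symm huv, hv⟩),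
      Finset.card_erase_of_mem hu, hB]
  obtain ⟨w, hw⟩ := Finset.card_eq_one.1 h1
  have hwm : w ∈ (B.erase u).erase v := hw ▸ Finset.mem_singleton_self w
  refine ⟨w, (Finset.mem_erase.1 (Finset.mem_of_mem_erase hwm)).1,
    (Finset.mem_erase.1 hwm).1, ?_⟩
  have : B = insert u (insert v ((B.erase u).erase v)) := by
    rw [Finset.insert_erase (Finset.mem_erase.2 ⟨Ne.symm huv, hv⟩), Finset.insert_erase hu]
  rw [this, hw]

/-- Decompose a 2-element set containing a given element. -/
lemma second {B : Finset α} {u : α} (hB : B.card = 2) (hu : u ∈ B) :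
    ∃ w, w ≠ u ∧ B = {u, w} := by
  have h1 : (B.erase u).card = 1 := by
    rw [Finset.card_erase_of_mem hu, hB]
  obtain ⟨w, hw⟩ := Finset.card_eq_one.1 h1
  have hwm : w ∈ B.erase u := hw ▸ Finset.mem_singleton_self w
  refine ⟨w, (Finset.mem_erase.1 hwm).1, ?_⟩
  have : B = insert u (B.erase u) := (Finset.insert_erase hu).symm
  rw [this, hw]

lemma inter_elt {F : Finset (Finset α)} (hF : ∀ A ∈ F, ∀ B ∈ F, (A ∩ B).Nonempty)
    {A B : Finset α} (hA : A ∈ F) (hB : B ∈ F) : ∃ w, w ∈ A ∧ w ∈ B := by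
  obtain ⟨w, hw⟩ := hF A hA B hB
  exact ⟨w, Finset.mem_of_mem_inter_left hw, Finset.mem_of_mem_inter_right hw⟩

/-- If `{x,u} ∈ F` then every member avoiding `x` contains `u`. -/
lemma partner {F : Finset (Finset α)} (hF : ∀ A ∈ F, ∀ B ∈ F, (A ∩ B).Nonempty)
    {x u : α} (hxu : ({x, u} : Finset α) ∈ F) {B : Finset α} (hB : B ∈ F) (hxB : x ∉ B) :
    u ∈ B := by
  obtain ⟨w, hw1, hw2⟩ := inter_elt hF hxu hB
  rcases Finset.mem_insert.1 hw1 with h | h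
  · exact absurd (h ▸ hw2) hxB
  · exact (Finset.mem_singleton.1 h) ▸ hw2

/-- Cardinality of a biUnion of distinct singletons. -/
lemma biUnion_card_of_inj {s : Finset (Finset α)} {f : Finset α → Finset α}
    (h1 : ∀ B ∈ s, (f B).card = 1)
    (h2 : ∀ B ∈ s, ∀ B' ∈ s, f B = f B' → B = B') :
    (s.biUnion f).card = s.card := by
  rw [Finset.card_biUnion]
  · simp only [Finset.sum_congr rfl h1, Finset.sum_const, smul_eq_mul, mul_one]
  · intro B hB B' hB' hne
    rw [Function.onFun, Finset.disjoint_left]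
    intro w hw hw'
    obtain ⟨w1, hw1⟩ := Finset.card_eq_one.1 (h1 B hB)
    obtain ⟨w2, hw2⟩ := Finset.card_eq_one.1 (h1 B' hB')
    rw [hw1] at hw; rw [hw2] at hw'
    apply hne
    apply h2 B hB B' hB'
    rw [hw1, hw2, show w1 = w2 from (Finset.mem_singleton.1 hw).symm.trans (Finset.mem_singleton.1 hw')]

/-- The key existence predicate: a vertex `a` together with a set `N` of "good neighbours"
(joined to `a` inside some member, with `{a,u} ∉ F`) such that the number of members
avoiding `a` is at most `N.card + 1`. -/
def Sterb (F : Finset (Finset α)) : Prop :=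
  ∃ (a : α) (N : Finset α),
    (∃ A ∈ F, a ∈ A) ∧
    (∀ u ∈ N, u ≠ a ∧ ({a, u} : Finset α) ∉ F ∧ ∃ A ∈ F, a ∈ A ∧ u ∈ A) ∧
    (F.filter (fun B => a ∉ B)).card ≤ N.card + 1

theorem sterb_suffices {F : Finset (Finset α)}
    (hns : ∀ u : α, ({u} : Finset α) ∉ F) (hs : Sterb F) :
    ∃ a : α, ({a} : Finset α) ∈ F.biUnion Finset.powerset ∧
      F.card ≤ ((F.biUnion Finset.powerset).filter (fun B => a ∈ B)).card := by
  classical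
  obtain ⟨a, N, ⟨A0, hA0, haA0⟩, hN, hcard⟩ := hs
  have hmemC : ∀ S : Finset α, (∃ A ∈ F, S ⊆ A) → S ∈ F.biUnion Finset.powerset := by
    intro S ⟨A, hA, hSA⟩
    exact Finset.mem_biUnion.2 ⟨A, hA, Finset.mem_powerset.2 hSA⟩
  refine ⟨a, hmemC _ ⟨A0, hA0, Finset.singleton_subset_iff.2 haA0⟩, ?_⟩
  set C := F.biUnion Finset.powerset with hC
  set star := C.filter (fun B => a ∈ B) with hstar
  set X1 := F.filter (fun B => a ∈ B) with hX1
  set X2 := N.image (fun u => ({a, u} : Finset α)) with hX2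
  have hsub : X1 ∪ (X2 ∪ {({a} : Finset α)}) ⊆ star := by
    intro S hS
    rcases Finset.mem_union.1 hS with h | h
    · rw [hX1, Finset.mem_filter] at h
      exact Finset.mem_filter.2 ⟨hmemC _ ⟨S, h.1, le_refl S⟩, h.2⟩
    rcases Finset.mem_union.1 h with h | h
    · rw [hX2, Finset.mem_image] at h
      obtain ⟨u, hu, hSu⟩ := h
      obtain ⟨hu1, hu2, A, hA, haA, huA⟩ := hN u hu
      refine Finset.mem_filter.2 ⟨hmemC _ ⟨A, hA, ?_⟩, ?_⟩
      · rw [← hSu]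
        intro w hw
        rcases Finset.mem_insert.1 hw with h' | h'
        · exact h' ▸ haA
        · exact (Finset.mem_singleton.1 h') ▸ huA
      · rw [← hSu]; exact Finset.mem_insert_self a _

    · rw [Finset.mem_singleton.1 h]
      exact Finset.mem_filter.2 ⟨hmemC _ ⟨A0, hA0, Finset.singleton_subset_iff.2 haA0⟩,
        Finset.mem_singleton_self a⟩
  have hd23 : Disjoint X2 ({({a} : Finset α)} : Finset (Finset α)) := by
    rw [Finset.disjoint_right]
    intro S hS hS2
    rw [Finset.mem_singleton] at hS
    rw [hX2, Finset.mem_image] at hS2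
    obtain ⟨u, hu, hSu⟩ := hS2
    have hune := (hN u hu).1
    apply hune
    have : u ∈ ({a} : Finset α) := by
      rw [← hS, ← hSu]; exact Finset.mem_insert_of_mem (Finset.mem_singleton_self u)
    exact Finset.mem_singleton.1 this
  have hd123 : Disjoint X1 (X2 ∪ {({a} : Finset α)}) := by
    rw [Finset.disjoint_left]
    intro S hS hS2
    rw [hX1, Finset.mem_filter] at hS
    rcases Finset.mem_union.1 hS2 with h | h
    · rw [hX2, Finset.mem_image] at h
      obtain ⟨u, hu, hSu⟩ := h
      exact (hN u hu).2.1 (hSu ▸ hS.1)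
    · exact hns a ((Finset.mem_singleton.1 h) ▸ hS.1)
  have hX2card : X2.card = N.card := by
    rw [hX2]
    apply Finset.card_image_of_injOn
    intro u hu v hv huv
    have hua := (hN u hu).1
    have : u ∈ ({a, v} : Finset α) := by
      have hu1 : u ∈ ({a, u} : Finset α) := Finset.mem_insert_of_mem (Finset.mem_singleton_self u)
      simpa only [huv] using hu1
    rcases Finset.mem_insert.1 this with h | h
    · exact absurd h hua
    · exact Finset.mem_singleton.1 h
  have hcards : X1.card + (N.card + 1) = (X1 ∪ (X2 ∪ {({a} : Finset α)})).card := by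
    rw [Finset.card_union_of_disjoint hd123, Finset.card_union_of_disjoint hd23,
      hX2card, Finset.card_singleton]
  have hF2 : F.card = X1.card + (F.filter (fun B => a ∉ B)).card := by
    rw [hX1]
    exact (Finset.card_filter_add_card_filter_not (fun B => a ∈ B)).symm
  calc F.card = X1.card + (F.filter (fun B => a ∉ B)).card := hF2
    _ ≤ X1.card + (N.card + 1) := by omega
    _ = (X1 ∪ (X2 ∪ {({a} : Finset α)})).card := hcards
    _ ≤ star.card := Finset.card_le_card hsub


section Cases

variable {F : Finset (Finset α)}

/-- Case: the 2-element members form a triangle `{x,y},{y,z},{x,z}`. -/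
lemma tri_final
    (hF : ∀ A ∈ F, ∀ B ∈ F, (A ∩ B).Nonempty)
    (x y z : α) (hxy : x ≠ y) (hxz : x ≠ z) (hyz : y ≠ z)
    (hexy : ({x, y} : Finset α) ∈ F) (heyz : ({y, z} : Finset α) ∈ F)
    (hexz : ({x, z} : Finset α) ∈ F)
    (h2cl : ∀ e ∈ F, e.card = 2 → e = {x, y} ∨ e = {y, z} ∨ e = {x, z})
    (h23 : ∀ B ∈ F, B.card = 2 ∨ B.card = 3)
    (hle : (F.filter (fun B => x ∉ B ∧ B.card = 3)).card ≤
      (F.filter (fun B => y ∉ B ∧ B.card = 3)).card) :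
    Sterb F := by
  classical
  set Wy := F.filter (fun B => y ∉ B ∧ B.card = 3) with hWydef
  have hWy : ∀ B ∈ Wy, B ∈ F ∧ x ∈ B ∧ z ∈ B ∧ y ∉ B ∧ B.card = 3 := by
    intro B hB
    rw [hWydef, Finset.mem_filter] at hB
    obtain ⟨hBF, hBy, hB3⟩ := hB
    refine ⟨hBF, ?_, ?_, hBy, hB3⟩
    · exact partner hF (by rw [Finset.pair_comm]; exact hexy) hBF hBy
    · exact partner hF heyz hBF hBy
  have hf1 : ∀ B ∈ Wy, ((B.erase x).erase z).card = 1 := by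
    intro B hB
    obtain ⟨_, hx, hz, _, h3⟩ := hWy B hB
    rw [Finset.card_erase_of_mem (Finset.mem_erase.2 ⟨Ne.symm hxz, hz⟩),
      Finset.card_erase_of_mem hx, h3]
  have hrec : ∀ B ∈ Wy, B = insert x (insert z ((B.erase x).erase z)) := by
    intro B hB
    obtain ⟨_, hx, hz, _, _⟩ := hWy B hB
    rw [Finset.insert_erase (Finset.mem_erase.2 ⟨Ne.symm hxz, hz⟩), Finset.insert_erase hx]
  refine ⟨x, Wy.biUnion (fun B => (B.erase x).erase z),
    ⟨{x, y}, hexy, Finset.mem_insert_self x _⟩, ?_, ?_⟩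
  · intro u hu
    obtain ⟨B, hB, humem⟩ := Finset.mem_biUnion.1 hu
    obtain ⟨hBF, hx, hz, hy, h3⟩ := hWy B hB
    have huz : u ≠ z := (Finset.mem_erase.1 humem).1
    have hux : u ≠ x := (Finset.mem_erase.1 (Finset.mem_of_mem_erase humem)).1
    have huB : u ∈ B := Finset.mem_of_mem_erase (Finset.mem_of_mem_erase humem)
    have huy : u ≠ y := fun h => hy (h ▸ huB)
    refine ⟨hux, ?_, B, hBF, hx, huB⟩
    intro hin
    have hc2 : ({x, u} : Finset α).card = 2 := by
      rw [Finset.card_insert_of_notMem (by simpa using Ne.symm hux), Finset.card_singleton]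
    rcases h2cl _ hin hc2 with h | h | h
    · have : u ∈ ({x, y} : Finset α) := h ▸ Finset.mem_insert_of_mem (Finset.mem_singleton_self u)
      rcases Finset.mem_insert.1 this with h' | h'
      · exact hux h'
      · exact huy (Finset.mem_singleton.1 h')
    · have : x ∈ ({y, z} : Finset α) := h ▸ Finset.mem_insert_self x _
      rcases Finset.mem_insert.1 this with h' | h'
      · exact hxy h'
      · exact hxz (Finset.mem_singleton.1 h')
    · have : u ∈ ({x, z} : Finset α) := h ▸ Finset.mem_insert_of_mem (Finset.mem_singleton_self u)
      rcases Finset.mem_insert.1 this with h' | h'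
      · exact hux h'
      · exact huz (Finset.mem_singleton.1 h')
  · have hNcard : (Wy.biUnion (fun B => (B.erase x).erase z)).card = Wy.card := by
      apply biUnion_card_of_inj hf1
      intro B hB B' hB' heq
      rw [hrec B hB, hrec B' hB', heq]
    rw [hNcard]
    have hsub : F.filter (fun B => x ∉ B) ⊆
        insert ({y, z} : Finset α) (F.filter (fun B => x ∉ B ∧ B.card = 3)) := by
      intro B hB
      rw [Finset.mem_filter] at hB
      obtain ⟨hBF, hBx⟩ := hB
      rcases h23 B hBF with h | h
      · rcases h2cl B hBF h with h' | h' | h'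
        · exact absurd (h' ▸ Finset.mem_insert_self x _) hBx
        · exact h' ▸ Finset.mem_insert_self _ _
        · exact absurd (h' ▸ Finset.mem_insert_self x _) hBx
      · exact Finset.mem_insert_of_mem (Finset.mem_filter.2 ⟨hBF, hBx, h⟩)
    calc (F.filter (fun B => x ∉ B)).card
        ≤ (insert ({y, z} : Finset α) (F.filter (fun B => x ∉ B ∧ B.card = 3))).card :=
          Finset.card_le_card hsub
      _ ≤ (F.filter (fun B => x ∉ B ∧ B.card = 3)).card + 1 := Finset.card_insert_le _ _
      _ ≤ Wy.card + 1 := by omega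

lemma case_P2
    (hF : ∀ A ∈ F, ∀ B ∈ F, (A ∩ B).Nonempty)
    (hm2 : ∀ a : α, (∃ A ∈ F, a ∈ A) → 2 ≤ (F.filter (fun B => a ∉ B)).card)
    (c u1 u2 : α) (hcu1 : c ≠ u1) (hcu2 : c ≠ u2) (hu12 : u1 ≠ u2)
    (he1 : ({c, u1} : Finset α) ∈ F) (he2 : ({c, u2} : Finset α) ∈ F)
    (h2cl : ∀ e ∈ F, e.card = 2 → e = {c, u1} ∨ e = {c, u2})
    (h23 : ∀ B ∈ F, B.card = 2 ∨ B.card = 3) :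
    Sterb F := by
  classical
  have hpaircard : ∀ (v w : α), v ≠ w → ({v, w} : Finset α).card = 2 := by
    intro v w hvw
    rw [Finset.card_insert_of_notMem (by simpa using hvw), Finset.card_singleton]
  have hMc : ∀ B ∈ F, c ∉ B → u1 ∈ B ∧ u2 ∈ B := fun B hB hc =>
    ⟨partner hF he1 hB hc, partner hF he2 hB hc⟩
  have hu12F : ({u1, u2} : Finset α) ∉ F := by
    intro h
    rcases h2cl _ h (hpaircard _ _ hu12) with h' | h'
    · have : u2 ∈ ({c, u1} : Finset α) :=
        h' ▸ Finset.mem_insert_of_mem (Finset.mem_singleton_self u2)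
      rcases Finset.mem_insert.1 this with h'' | h''
      · exact hcu2 h''.symm
      · exact hu12 (Finset.mem_singleton.1 h'').symm
    · have : u1 ∈ ({c, u2} : Finset α) := h' ▸ Finset.mem_insert_self u1 _
      rcases Finset.mem_insert.1 this with h'' | h''
      · exact hcu1 h''.symm
      · exact hu12 (Finset.mem_singleton.1 h'')
  by_cases hq : ∃ B ∈ F, c ∈ B ∧ u1 ∉ B ∧ u2 ∉ B
  · obtain ⟨B0, hB0F, hB0c, hB0u1, hB0u2⟩ := hq
    have hB03 : B0.card = 3 := by
      rcases h23 _ hB0F with h | h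
      · exfalso
        rcases h2cl _ hB0F h with h' | h'
        · exact hB0u1 (h' ▸ Finset.mem_insert_of_mem (Finset.mem_singleton_self u1))
        · exact hB0u2 (h' ▸ Finset.mem_insert_of_mem (Finset.mem_singleton_self u2))
      · exact h
    have hBe : (B0.erase c).card = 2 := by
      rw [Finset.card_erase_of_mem hB0c, hB03]
    obtain ⟨g, d, hgd, hgdeq⟩ := Finset.card_eq_two.1 hBe
    have hgB : g ∈ B0 ∧ g ≠ c := by
      have : g ∈ B0.erase c := hgdeq ▸ Finset.mem_insert_self g _
      exact ⟨Finset.mem_of_mem_erase this, (Finset.mem_erase.1 this).1⟩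
    have hdB : d ∈ B0 ∧ d ≠ c := by
      have : d ∈ B0.erase c := hgdeq ▸ Finset.mem_insert_of_mem (Finset.mem_singleton_self d)
      exact ⟨Finset.mem_of_mem_erase this, (Finset.mem_erase.1 this).1⟩
    have hgood : ∀ w, w ∈ B0 → w ≠ c → w ≠ c ∧ ({c, w} : Finset α) ∉ F ∧
        ∃ A ∈ F, c ∈ A ∧ w ∈ A := by
      intro w hwB hwc
      refine ⟨hwc, ?_, B0, hB0F, hB0c, hwB⟩
      intro hin
      rcases h2cl _ hin (hpaircard _ _ (Ne.symm hwc)) with h' | h'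
      · have : w ∈ ({c, u1} : Finset α) :=
          h' ▸ Finset.mem_insert_of_mem (Finset.mem_singleton_self w)
        rcases Finset.mem_insert.1 this with h'' | h''
        · exact hwc h''
        · exact hB0u1 ((Finset.mem_singleton.1 h'') ▸ hwB)
      · have : w ∈ ({c, u2} : Finset α) :=
          h' ▸ Finset.mem_insert_of_mem (Finset.mem_singleton_self w)
        rcases Finset.mem_insert.1 this with h'' | h''
        · exact hwc h''
        · exact hB0u2 ((Finset.mem_singleton.1 h'') ▸ hwB)
    refine ⟨c, {g, d}, ⟨{c, u1}, he1, Finset.mem_insert_self c _⟩, ?_, ?_⟩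
    · intro w hw
      rcases Finset.mem_insert.1 hw with h | h
      · subst h; exact hgood w hgB.1 hgB.2
      · have h' := Finset.mem_singleton.1 h
        subst h'; exact hgood w hdB.1 hdB.2
    · have hsub : F.filter (fun B => c ∉ B) ⊆
          ({g, d} : Finset α).image (fun w => ({u1, u2, w} : Finset α)) := by
        intro B hB
        rw [Finset.mem_filter] at hB
        obtain ⟨hBF, hBc⟩ := hB
        obtain ⟨hu1B, hu2B⟩ := hMc B hBF hBc
        have hB3 : B.card = 3 := by
          rcases h23 _ hBF with h | h
          · exfalso
            rcases h2cl _ hBF h with h' | h'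
            · exact hBc (h' ▸ Finset.mem_insert_self c _)
            · exact hBc (h' ▸ Finset.mem_insert_self c _)
          · exact h
        obtain ⟨w, hwu1, hwu2, hBeq⟩ := third hB3 hu1B hu2B hu12
        obtain ⟨v, hvB, hvB0⟩ := inter_elt hF hBF hB0F
        have hvw : v = w := by
          have : v ∈ ({u1, u2, w} : Finset α) := hBeq ▸ hvB
          rcases Finset.mem_insert.1 this with h | h
          · exact absurd (h ▸ hvB0) hB0u1
          rcases Finset.mem_insert.1 h with h | h
          · exact absurd (h ▸ hvB0) hB0u2
          · exact Finset.mem_singleton.1 h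
        have hvgd : v ∈ ({g, d} : Finset α) := by
          have hvrec : v ∈ B0.erase c := Finset.mem_erase.2 ⟨fun h => hBc (h ▸ hvB), hvB0⟩
          rw [hgdeq] at hvrec; exact hvrec
        exact Finset.mem_image.2 ⟨v, hvgd, by rw [hvw, ← hBeq]⟩
      calc (F.filter (fun B => c ∉ B)).card
          ≤ (({g, d} : Finset α).image (fun w => ({u1, u2, w} : Finset α))).card :=
            Finset.card_le_card hsub
        _ ≤ ({g, d} : Finset α).card := Finset.card_image_le
        _ ≤ ({g, d} : Finset α).card + 1 := by omega
  · push_neg at hq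
    have hq2 : ∀ B ∈ F, c ∈ B → u1 ∈ B ∨ u2 ∈ B := by
      intro B hB hc
      by_cases h1 : u1 ∈ B
      · exact Or.inl h1
      · exact Or.inr (hq B hB hc h1)
    -- symmetric final step
    have final : ∀ v1 v2 : α, v1 ≠ v2 → c ≠ v1 → c ≠ v2 →
        ({c, v1} : Finset α) ∈ F → ({c, v2} : Finset α) ∈ F →
        (∀ e ∈ F, e.card = 2 → e = {c, v1} ∨ e = {c, v2}) →
        (∀ B ∈ F, c ∉ B → v1 ∈ B ∧ v2 ∈ B) →
        (∀ B ∈ F, c ∈ B → v1 ∈ B ∨ v2 ∈ B) →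
        ({v1, v2} : Finset α) ∉ F →
        ((F.filter (fun B => c ∈ B ∧ v2 ∈ B ∧ v1 ∉ B ∧ B.card = 3)).card ≤
          (F.filter (fun B => c ∈ B ∧ v1 ∈ B ∧ v2 ∉ B ∧ B.card = 3)).card) →
        Sterb F := by
      clear hq2 hq hu12F hMc he1 he2 h2cl hcu1 hcu2 hu12
      intro v1 v2 hv12 hcv1 hcv2 he1 he2 h2cl hMc hq2 hv12F hle
      set P1 := F.filter (fun B => c ∈ B ∧ v1 ∈ B ∧ v2 ∉ B ∧ B.card = 3) with hP1def
      set P2 := F.filter (fun B => c ∈ B ∧ v2 ∈ B ∧ v1 ∉ B ∧ B.card = 3) with hP2def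
      have hP1p : ∀ B ∈ P1, B ∈ F ∧ c ∈ B ∧ v1 ∈ B ∧ v2 ∉ B ∧ B.card = 3 := by
        intro B hB
        rw [hP1def, Finset.mem_filter] at hB
        exact ⟨hB.1, hB.2⟩
      have hf1 : ∀ B ∈ P1, ((B.erase c).erase v1).card = 1 := by
        intro B hB
        obtain ⟨_, hc, hv, _, h3⟩ := hP1p B hB
        rw [Finset.card_erase_of_mem (Finset.mem_erase.2 ⟨fun h => hcv1 h.symm, hv⟩),
          Finset.card_erase_of_mem hc, h3]
      have hrec : ∀ B ∈ P1, B = insert c (insert v1 ((B.erase c).erase v1)) := by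
        intro B hB
        obtain ⟨_, hc, hv, _, _⟩ := hP1p B hB
        rw [Finset.insert_erase (Finset.mem_erase.2 ⟨fun h => hcv1 h.symm, hv⟩),
          Finset.insert_erase hc]
      have hBc : ∃ B ∈ F, c ∉ B := by
        have h2c := hm2 c ⟨{c, v1}, he1, Finset.mem_insert_self c _⟩
        have : (F.filter (fun B => c ∉ B)).Nonempty := Finset.card_pos.1 (by omega)
        obtain ⟨B, hB⟩ := this
        rw [Finset.mem_filter] at hB
        exact ⟨B, hB.1, hB.2⟩
      obtain ⟨Bc, hBcF, hBcc⟩ := hBc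
      set N := insert v2 (P1.biUnion (fun B => (B.erase c).erase v1)) with hNdef
      have hv2nb : v2 ∉ P1.biUnion (fun B => (B.erase c).erase v1) := by
        intro h
        obtain ⟨B, hB, hmem⟩ := Finset.mem_biUnion.1 h
        exact (hP1p B hB).2.2.2.1 (Finset.mem_of_mem_erase (Finset.mem_of_mem_erase hmem))
      have hNcard : N.card = P1.card + 1 := by
        rw [hNdef, Finset.card_insert_of_notMem hv2nb]
        congr 1
        apply biUnion_card_of_inj hf1
        intro B hB B' hB' heq
        rw [hrec B hB, hrec B' hB', heq]
      refine ⟨v1, N, ⟨{c, v1}, he1, Finset.mem_insert_of_mem (Finset.mem_singleton_self v1)⟩,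
        ?_, ?_⟩
      · intro u hu
        rcases Finset.mem_insert.1 hu with h | h
        · subst h
          refine ⟨Ne.symm hv12, by rw [Finset.pair_comm] at hv12F ⊢; exact hv12F,
            Bc, hBcF, (hMc Bc hBcF hBcc).1, (hMc Bc hBcF hBcc).2⟩
        · obtain ⟨B, hB, hmem⟩ := Finset.mem_biUnion.1 h
          obtain ⟨hBF, hcB, hv1B, hv2B, h3⟩ := hP1p B hB
          have huv1 : u ≠ v1 := (Finset.mem_erase.1 hmem).1
          have huc : u ≠ c := (Finset.mem_erase.1 (Finset.mem_of_mem_erase hmem)).1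
          have huB : u ∈ B := Finset.mem_of_mem_erase (Finset.mem_of_mem_erase hmem)
          refine ⟨huv1, ?_, B, hBF, hv1B, huB⟩
          intro hin
          have hc2 : ({v1, u} : Finset α).card = 2 := by
            rw [Finset.card_insert_of_notMem (by simpa using Ne.symm huv1),
              Finset.card_singleton]
          rcases h2cl _ hin hc2 with h' | h'
          · have : u ∈ ({c, v1} : Finset α) :=
              h' ▸ Finset.mem_insert_of_mem (Finset.mem_singleton_self u)
            rcases Finset.mem_insert.1 this with h'' | h''
            · exact huc h''
            · exact huv1 (Finset.mem_singleton.1 h'')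
          · have : v1 ∈ ({c, v2} : Finset α) := h' ▸ Finset.mem_insert_self v1 _
            rcases Finset.mem_insert.1 this with h'' | h''
            · exact hcv1 h''.symm
            · exact hv12 (Finset.mem_singleton.1 h'')
      · have hsub : F.filter (fun B => v1 ∉ B) ⊆ insert ({c, v2} : Finset α) P2 := by
          intro B hB
          rw [Finset.mem_filter] at hB
          obtain ⟨hBF, hBv1⟩ := hB
          have hcB : c ∈ B := by
            by_contra hc
            exact hBv1 (hMc B hBF hc).1
          rcases h23 B hBF with h | h
          · rcases h2cl B hBF h with h' | h'
            · exact absurd (h' ▸ Finset.mem_insert_of_mem (Finset.mem_singleton_self v1)) hBv1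
            · exact h' ▸ Finset.mem_insert_self _ _
          · rcases hq2 B hBF hcB with h' | h'
            · exact absurd h' hBv1
            · exact Finset.mem_insert_of_mem (Finset.mem_filter.2 ⟨hBF, hcB, h', hBv1, h⟩)
        calc (F.filter (fun B => v1 ∉ B)).card
            ≤ (insert ({c, v2} : Finset α) P2).card := Finset.card_le_card hsub
          _ ≤ P2.card + 1 := Finset.card_insert_le _ _
          _ ≤ P1.card + 1 := by omega
          _ ≤ N.card := by omega
          _ ≤ N.card + 1 := by omega
    rcases le_total ((F.filter (fun B => c ∈ B ∧ u2 ∈ B ∧ u1 ∉ B ∧ B.card = 3)).card)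
        ((F.filter (fun B => c ∈ B ∧ u1 ∈ B ∧ u2 ∉ B ∧ B.card = 3)).card) with h | h
    · exact final u1 u2 hu12 hcu1 hcu2 he1 he2 h2cl hMc hq2 hu12F h
    · refine final u2 u1 (Ne.symm hu12) hcu2 hcu1 he2 he1 ?_ ?_ ?_ ?_ h
      · intro e he hec
        exact (h2cl e he hec).symm
      · intro B hB hc
        exact (hMc B hB hc).symm
      · intro B hB hc
        exact (hq2 B hB hc).symm
      · rw [Finset.pair_comm]; exact hu12F

lemma filter_cover_eq {x y : α} (hcov : ∀ B ∈ F, x ∈ B ∨ y ∈ B) :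
    F.filter (fun B => x ∉ B) = F.filter (fun B => y ∈ B ∧ x ∉ B) := by
  ext B
  simp only [Finset.mem_filter]
  constructor
  · rintro ⟨hBF, hx⟩
    exact ⟨hBF, (hcov B hBF).resolve_left hx, hx⟩
  · rintro ⟨h1, _, h3⟩
    exact ⟨h1, h3⟩

lemma txprops {x y : α} (hxy : x ≠ y)
    (h2cl : ∀ e ∈ F, e.card = 2 → e = {x, y})
    (h23 : ∀ B ∈ F, B.card = 2 ∨ B.card = 3) :
    ∀ B ∈ F.filter (fun B => x ∈ B ∧ y ∉ B), B ∈ F ∧ x ∈ B ∧ y ∉ B ∧ B.card = 3 := by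
  intro B hB
  rw [Finset.mem_filter] at hB
  obtain ⟨hBF, hBx, hBy⟩ := hB
  refine ⟨hBF, hBx, hBy, ?_⟩
  rcases h23 B hBF with h | h
  · exact absurd ((h2cl B hBF h) ▸ Finset.mem_insert_of_mem (Finset.mem_singleton_self y)) hBy
  · exact h

/-- Good pairs `{x,u}` are never members when the only 2-member is `{x,y}` and `u ≠ y`. -/
lemma pair_not_mem {x y u : α} (hux : u ≠ x) (huy : u ≠ y)
    (h2cl : ∀ e ∈ F, e.card = 2 → e = {x, y}) :
    ({x, u} : Finset α) ∉ F := by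
  intro hin
  have hc2 : ({x, u} : Finset α).card = 2 := by
    rw [Finset.card_insert_of_notMem (by simpa using Ne.symm hux), Finset.card_singleton]
  have h := h2cl _ hin hc2
  have : u ∈ ({x, y} : Finset α) := h ▸ Finset.mem_insert_of_mem (Finset.mem_singleton_self u)
  rcases Finset.mem_insert.1 this with h' | h'
  · exact hux h'
  · exact huy (Finset.mem_singleton.1 h')

lemma cover2_side
    (hF : ∀ A ∈ F, ∀ B ∈ F, (A ∩ B).Nonempty)
    (x y : α) (hxy : x ≠ y)
    (hcov : ∀ B ∈ F, x ∈ B ∨ y ∈ B)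
    (h2cl : ∀ e ∈ F, e.card = 2 → e = {x, y})
    (h23 : ∀ B ∈ F, B.card = 2 ∨ B.card = 3)
    (hxV : ∃ A ∈ F, x ∈ A)
    (hTxne : (F.filter (fun B => x ∈ B ∧ y ∉ B)).Nonempty)
    (hnp : ∀ p : α, p ≠ x → ∃ B ∈ F.filter (fun B => x ∈ B ∧ y ∉ B), p ∉ B) :
    Sterb F := by
  classical
  set Tx := F.filter (fun B => x ∈ B ∧ y ∉ B) with hTxdef
  have hTx := txprops hxy h2cl h23
  -- decompose a Tx member as {x, b1, b2}
  have hdecomp : ∀ B ∈ Tx, ∃ b1 b2 : α, b1 ≠ b2 ∧ B = {x, b1, b2} ∧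
      b1 ≠ x ∧ b2 ≠ x ∧ b1 ≠ y ∧ b2 ≠ y ∧ b1 ∈ B ∧ b2 ∈ B := by
    intro B hB
    obtain ⟨hBF, hBx, hBy, h3⟩ := hTx B hB
    have he2 : (B.erase x).card = 2 := by rw [Finset.card_erase_of_mem hBx, h3]
    obtain ⟨b1, b2, hb12, hbeq⟩ := Finset.card_eq_two.1 he2
    have hb1 : b1 ∈ B.erase x := hbeq ▸ Finset.mem_insert_self b1 _
    have hb2 : b2 ∈ B.erase x := hbeq ▸ Finset.mem_insert_of_mem (Finset.mem_singleton_self b2)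
    have hb1B := Finset.mem_of_mem_erase hb1
    have hb2B := Finset.mem_of_mem_erase hb2
    refine ⟨b1, b2, hb12, ?_, (Finset.mem_erase.1 hb1).1, (Finset.mem_erase.1 hb2).1,
      fun h => hBy (h ▸ hb1B), fun h => hBy (h ▸ hb2B), hb1B, hb2B⟩
    rw [← hbeq, Finset.insert_erase hBx]
  -- mem of F.filter (x ∉ ·) decomposes as {y, s, t}
  have hTydecomp : ∀ B' ∈ F.filter (fun B => x ∉ B), B' ∈ F ∧ y ∈ B' ∧ x ∉ B' ∧
      B'.card = 3 := by
    intro B' hB'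
    rw [filter_cover_eq hcov, Finset.mem_filter] at hB'
    obtain ⟨hBF, hBy, hBx⟩ := hB'
    refine ⟨hBF, hBy, hBx, ?_⟩
    rcases h23 B' hBF with h | h
    · exact absurd ((h2cl B' hBF h) ▸ Finset.mem_insert_self x _) hBx
    · exact h
  by_cases hdisj : ∃ B ∈ Tx, ∃ B' ∈ Tx, ∀ w ∈ B, w ≠ x → w ∉ B'
  · obtain ⟨B1, hB1, B2, hB2, hdis⟩ := hdisj
    obtain ⟨b1, b2, hb12, hB1eq, hb1x, hb2x, hb1y, hb2y, hb1B, hb2B⟩ := hdecomp B1 hB1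
    obtain ⟨c1, c2, hc12, hB2eq, hc1x, hc2x, hc1y, hc2y, hc1B, hc2B⟩ := hdecomp B2 hB2
    have hbc : ∀ b ∈ ({b1, b2} : Finset α), ∀ c ∈ ({c1, c2} : Finset α), b ≠ c := by
      intro b hb c hc hbc
      have hbB1 : b ∈ B1 := by
        rcases Finset.mem_insert.1 hb with h | h
        · exact h ▸ hb1B
        · exact (Finset.mem_singleton.1 h) ▸ hb2B
      have hbx : b ≠ x := by
        rcases Finset.mem_insert.1 hb with h | h
        · exact h ▸ hb1x
        · exact (Finset.mem_singleton.1 h) ▸ hb2x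
      have hcB2 : c ∈ B2 := by
        rcases Finset.mem_insert.1 hc with h | h
        · exact h ▸ hc1B
        · exact (Finset.mem_singleton.1 h) ▸ hc2B
      exact hdis b hbB1 hbx (hbc ▸ hcB2)
    refine ⟨x, {b1, b2, c1, c2}, hxV, ?_, ?_⟩
    · intro u hu
      have huB : (u ∈ B1 ∨ u ∈ B2) ∧ u ≠ x ∧ u ≠ y := by
        rcases Finset.mem_insert.1 hu with h | h
        · exact ⟨Or.inl (h ▸ hb1B), h ▸ hb1x, h ▸ hb1y⟩
        rcases Finset.mem_insert.1 h with h | h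
        · exact ⟨Or.inl (h ▸ hb2B), h ▸ hb2x, h ▸ hb2y⟩
        rcases Finset.mem_insert.1 h with h | h
        · exact ⟨Or.inr (h ▸ hc1B), h ▸ hc1x, h ▸ hc1y⟩
        · rw [Finset.mem_singleton] at h
          exact ⟨Or.inr (h ▸ hc2B), h ▸ hc2x, h ▸ hc2y⟩
      obtain ⟨hmem, hux, huy⟩ := huB
      refine ⟨hux, pair_not_mem hux huy h2cl, ?_⟩
      rcases hmem with h | h
      · exact ⟨B1, (hTx B1 hB1).1, (hTx B1 hB1).2.1, h⟩
      · exact ⟨B2, (hTx B2 hB2).1, (hTx B2 hB2).2.1, h⟩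
    · have hsub : F.filter (fun B => x ∉ B) ⊆
          (({b1, b2} : Finset α) ×ˢ ({c1, c2} : Finset α)).image
            (fun p => ({y, p.1, p.2} : Finset α)) := by
        intro B' hB'
        obtain ⟨hBF, hBy, hBx, h3⟩ := hTydecomp B' hB'
        obtain ⟨w1, hw1B1, hw1B'⟩ := inter_elt hF ((hTx B1 hB1).1) hBF
        obtain ⟨w2, hw2B2, hw2B'⟩ := inter_elt hF ((hTx B2 hB2).1) hBF
        have hw1 : w1 ∈ ({b1, b2} : Finset α) := by
          have : w1 ∈ ({x, b1, b2} : Finset α) := hB1eq ▸ hw1B1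
          rcases Finset.mem_insert.1 this with h | h
          · exact absurd (h ▸ hw1B') hBx
          · exact h
        have hw2 : w2 ∈ ({c1, c2} : Finset α) := by
          have : w2 ∈ ({x, c1, c2} : Finset α) := hB2eq ▸ hw2B2
          rcases Finset.mem_insert.1 this with h | h
          · exact absurd (h ▸ hw2B') hBx
          · exact h
        have hw1x : w1 ≠ x := fun h => hBx (h ▸ hw1B')
        have hw1y : w1 ≠ y := fun h => (hTx B1 hB1).2.2.1 (h ▸ hw1B1)
        have hw12 : w1 ≠ w2 := by
          intro h
          exact hbc w1 hw1 w2 hw2 h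
        obtain ⟨w, hwy, hww1, hBeq⟩ := third h3 hBy hw1B' (Ne.symm hw1y)
        have hw2w : w2 = w := by
          have : w2 ∈ ({y, w1, w} : Finset α) := hBeq ▸ hw2B'
          rcases Finset.mem_insert.1 this with h | h
          · exact absurd h (fun hh => (hTx B2 hB2).2.2.1 (hh ▸ hw2B2))
          rcases Finset.mem_insert.1 h with h | h
          · exact absurd h hw12.symm
          · exact Finset.mem_singleton.1 h
        exact Finset.mem_image.2 ⟨(w1, w2), Finset.mem_product.2 ⟨hw1, hw2⟩,
          by rw [hBeq, hw2w]⟩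
      calc (F.filter (fun B => x ∉ B)).card
          ≤ ((({b1, b2} : Finset α) ×ˢ ({c1, c2} : Finset α)).image
              (fun p => ({y, p.1, p.2} : Finset α))).card := Finset.card_le_card hsub
        _ ≤ (({b1, b2} : Finset α) ×ˢ ({c1, c2} : Finset α)).card := Finset.card_image_le
        _ ≤ 4 := by
            rw [Finset.card_product]
            have h1 : ({b1, b2} : Finset α).card ≤ 2 :=
              le_trans (Finset.card_insert_le _ _) (by simp)
            have h2 : ({c1, c2} : Finset α).card ≤ 2 :=
              le_trans (Finset.card_insert_le _ _) (by simp)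
            nlinarith
        _ ≤ ({b1, b2, c1, c2} : Finset α).card + 1 := by
            have : ({b1, b2, c1, c2} : Finset α).card = 4 := by
              have hb1c : b1 ∉ ({b2, c1, c2} : Finset α) := by
                simp only [Finset.mem_insert, Finset.mem_singleton]
                push_neg
                exact ⟨hb12, fun h => hbc b1 (Finset.mem_insert_self _ _) c1
                  (Finset.mem_insert_self _ _) h, fun h => hbc b1 (Finset.mem_insert_self _ _)
                  c2 (Finset.mem_insert_of_mem (Finset.mem_singleton_self c2)) h⟩
              have hb2c : b2 ∉ ({c1, c2} : Finset α) := by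
                simp only [Finset.mem_insert, Finset.mem_singleton]
                push_neg
                have hm : b2 ∈ ({b1, b2} : Finset α) :=
                  Finset.mem_insert_of_mem (Finset.mem_singleton_self b2)
                exact ⟨fun h => hbc b2 hm c1 (Finset.mem_insert_self _ _) h,
                  fun h => hbc b2 hm c2 (Finset.mem_insert_of_mem (Finset.mem_singleton_self c2)) h⟩
              have hc1c : c1 ∉ ({c2} : Finset α) := by simpa using hc12
              rw [Finset.card_insert_of_notMem hb1c, Finset.card_insert_of_notMem hb2c,
                Finset.card_insert_of_notMem hc1c, Finset.card_singleton]
            omega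
  · push_neg at hdisj
    obtain ⟨B1, hB1⟩ := hTxne
    obtain ⟨b1, b2, hb12, hB1eq, hb1x, hb2x, hb1y, hb2y, hb1B, hb2B⟩ := hdecomp B1 hB1
    obtain ⟨B2, hB2, hb1B2⟩ := hnp b1 hb1x
    have hb2B2 : b2 ∈ B2 := by
      obtain ⟨w, hwB1, hwx, hwB2⟩ := hdisj B1 hB1 B2 hB2
      have : w ∈ ({x, b1, b2} : Finset α) := hB1eq ▸ hwB1
      rcases Finset.mem_insert.1 this with h | h
      · exact absurd h hwx
      rcases Finset.mem_insert.1 h with h | h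
      · exact absurd (h ▸ hwB2) hb1B2
      · exact (Finset.mem_singleton.1 h) ▸ hwB2
    obtain ⟨hB2F, hB2x, hB2y, hB23⟩ := hTx B2 hB2
    obtain ⟨c3, hc3x, hc3b2, hB2eq⟩ := third hB23 hB2x hb2B2 (Ne.symm hb2x)
    have hc3B2 : c3 ∈ B2 := hB2eq ▸ Finset.mem_insert_of_mem
      (Finset.mem_insert_of_mem (Finset.mem_singleton_self c3))
    have hc3b1 : c3 ≠ b1 := fun h => hb1B2 (h ▸ hc3B2)
    have hc3y : c3 ≠ y := fun h => hB2y (h ▸ hc3B2)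
    obtain ⟨B3, hB3, hb2B3⟩ := hnp b2 hb2x
    have hb1B3 : b1 ∈ B3 := by
      obtain ⟨w, hwB1, hwx, hwB3⟩ := hdisj B1 hB1 B3 hB3
      have : w ∈ ({x, b1, b2} : Finset α) := hB1eq ▸ hwB1
      rcases Finset.mem_insert.1 this with h | h
      · exact absurd h hwx
      rcases Finset.mem_insert.1 h with h | h
      · exact h ▸ hwB3
      · exact absurd ((Finset.mem_singleton.1 h) ▸ hwB3) hb2B3
    have hc3B3 : c3 ∈ B3 := by
      obtain ⟨w, hwB2, hwx, hwB3⟩ := hdisj B2 hB2 B3 hB3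
      have : w ∈ ({x, b2, c3} : Finset α) := hB2eq ▸ hwB2
      rcases Finset.mem_insert.1 this with h | h
      · exact absurd h hwx
      rcases Finset.mem_insert.1 h with h | h
      · exact absurd (h ▸ hwB3) hb2B3
      · exact (Finset.mem_singleton.1 h) ▸ hwB3
    have hNcard : ({b1, b2, c3} : Finset α).card = 3 :=
      Finset.card_eq_three.2 ⟨b1, b2, c3, hb12, Ne.symm hc3b1, Ne.symm hc3b2, rfl⟩
    refine ⟨x, {b1, b2, c3}, hxV, ?_, ?_⟩
    · intro u hu
      have huB : (u ∈ B1 ∨ u ∈ B2) ∧ u ≠ x ∧ u ≠ y := by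
        rcases Finset.mem_insert.1 hu with h | h
        · exact ⟨Or.inl (h ▸ hb1B), h ▸ hb1x, h ▸ hb1y⟩
        rcases Finset.mem_insert.1 h with h | h
        · exact ⟨Or.inl (h ▸ hb2B), h ▸ hb2x, h ▸ hb2y⟩
        · rw [Finset.mem_singleton] at h
          exact ⟨Or.inr (h ▸ hc3B2), h ▸ hc3x, h ▸ hc3y⟩
      obtain ⟨hmem, hux, huy⟩ := huB
      refine ⟨hux, pair_not_mem hux huy h2cl, ?_⟩
      rcases hmem with h | h
      · exact ⟨B1, (hTx B1 hB1).1, (hTx B1 hB1).2.1, h⟩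
      · exact ⟨B2, hB2F, hB2x, h⟩
    · have hsub : F.filter (fun B => x ∉ B) ⊆
          (Finset.powersetCard 2 ({b1, b2, c3} : Finset α)).image (fun P => insert y P) := by
        intro B' hB'
        obtain ⟨hBF, hBy, hBx, h3⟩ := hTydecomp B' hB'
        obtain ⟨w1, hw1B1, hw1B'⟩ := inter_elt hF ((hTx B1 hB1).1) hBF
        obtain ⟨w2, hw2B2, hw2B'⟩ := inter_elt hF hB2F hBF
        obtain ⟨w3, hw3B3, hw3B'⟩ := inter_elt hF ((hTx B3 hB3).1) hBF
        have hw1m : w1 ∈ ({b1, b2} : Finset α) := by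
          have : w1 ∈ ({x, b1, b2} : Finset α) := hB1eq ▸ hw1B1
          rcases Finset.mem_insert.1 this with h | h
          · exact absurd (h ▸ hw1B') hBx
          · exact h
        have hw2m : w2 ∈ ({b2, c3} : Finset α) := by
          have : w2 ∈ ({x, b2, c3} : Finset α) := hB2eq ▸ hw2B2
          rcases Finset.mem_insert.1 this with h | h
          · exact absurd (h ▸ hw2B') hBx
          · exact h
        have hw3m : w3 ∈ ({b1, c3} : Finset α) := by
          have hB33 := (hTx B3 hB3).2.2.2
          have hB3x := (hTx B3 hB3).2.1
          have hB3eq : B3 = {x, b1, c3} := by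
            have hsub : ({x, b1, c3} : Finset α) ⊆ B3 := by
              intro v hv
              rcases Finset.mem_insert.1 hv with h | h
              · exact h ▸ hB3x
              rcases Finset.mem_insert.1 h with h | h
              · exact h ▸ hb1B3
              · exact (Finset.mem_singleton.1 h) ▸ hc3B3
            have : ({x, b1, c3} : Finset α).card = 3 :=
              Finset.card_eq_three.2 ⟨x, b1, c3, Ne.symm hb1x, Ne.symm hc3x, Ne.symm hc3b1, rfl⟩
            exact (Finset.eq_of_subset_of_card_le hsub (by omega)).symm
          have : w3 ∈ ({x, b1, c3} : Finset α) := hB3eq ▸ hw3B3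
          rcases Finset.mem_insert.1 this with h | h
          · exact absurd (h ▸ hw3B') hBx
          · exact h
        -- B' = {y, s, t}; both s and t belong to {b1,b2,c3}
        have hey : (B'.erase y).card = 2 := by rw [Finset.card_erase_of_mem hBy, h3]
        obtain ⟨st, htt, hstne, hsteq⟩ := Finset.card_eq_two.1 hey
        have key : ∀ v o : α, B'.erase y = {v, o} → v ∉ ({b1, b2, c3} : Finset α) → False := by
          intro v o heq hvN
          have hwo : ∀ w : α, w ∈ B' → w ≠ y → w ∈ ({b1, b2, c3} : Finset α) → w = o := by
            intro w hwB hwy hwN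
            have : w ∈ ({v, o} : Finset α) := heq ▸ Finset.mem_erase.2 ⟨hwy, hwB⟩
            rcases Finset.mem_insert.1 this with h | h
            · exact absurd (h ▸ hwN) hvN
            · exact Finset.mem_singleton.1 h
          have hw1y : w1 ≠ y := by
            rcases Finset.mem_insert.1 hw1m with h | h
            · exact h ▸ hb1y
            · exact (Finset.mem_singleton.1 h) ▸ hb2y
          have hw2y : w2 ≠ y := by
            rcases Finset.mem_insert.1 hw2m with h | h
            · exact h ▸ hb2y
            · exact (Finset.mem_singleton.1 h) ▸ hc3y
          have hw3y : w3 ≠ y := by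
            rcases Finset.mem_insert.1 hw3m with h | h
            · exact h ▸ hb1y
            · exact (Finset.mem_singleton.1 h) ▸ hc3y
          have hw1N : w1 ∈ ({b1, b2, c3} : Finset α) := by
            rcases Finset.mem_insert.1 hw1m with h | h
            · rw [h]; simp
            · rw [Finset.mem_singleton] at h; rw [h]; simp
          have hw2N : w2 ∈ ({b1, b2, c3} : Finset α) := by
            rcases Finset.mem_insert.1 hw2m with h | h
            · rw [h]; simp
            · rw [Finset.mem_singleton] at h; rw [h]; simp
          have hw3N : w3 ∈ ({b1, b2, c3} : Finset α) := by
            rcases Finset.mem_insert.1 hw3m with h | h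
            · rw [h]; simp
            · rw [Finset.mem_singleton] at h; rw [h]; simp
          have h1 := hwo w1 hw1B' hw1y hw1N
          have h2 := hwo w2 hw2B' hw2y hw2N
          have h3' := hwo w3 hw3B' hw3y hw3N
          rcases Finset.mem_insert.1 hw1m with h | h
          · have hb1o : b1 = o := by rw [← h]; exact h1
            rcases Finset.mem_insert.1 hw2m with h' | h'
            · have hb2o : b2 = o := by rw [← h']; exact h2
              exact hb12 (hb1o.trans hb2o.symm)
            · rw [Finset.mem_singleton] at h'
              have hc3o : c3 = o := by rw [← h']; exact h2
              exact hc3b1 (hc3o.trans hb1o.symm)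
          · rw [Finset.mem_singleton] at h
            have hb2o : b2 = o := by rw [← h]; exact h1
            rcases Finset.mem_insert.1 hw3m with h' | h'
            · have hb1o : b1 = o := by rw [← h']; exact h3'
              exact hb12 (hb1o.trans hb2o.symm)
            · rw [Finset.mem_singleton] at h'
              have hc3o : c3 = o := by rw [← h']; exact h3'
              exact hc3b2 (hc3o.trans hb2o.symm)
        have hstN : st ∈ ({b1, b2, c3} : Finset α) := by
          by_contra h
          exact key st htt hsteq h
        have htN : htt ∈ ({b1, b2, c3} : Finset α) := by
          by_contra h
          exact key htt st (by rw [hsteq, Finset.pair_comm]) h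
        refine Finset.mem_image.2 ⟨B'.erase y, ?_, by rw [Finset.insert_erase hBy]⟩
        refine Finset.mem_powersetCard.2 ⟨?_, hey⟩
        intro v hv
        have : v ∈ ({st, htt} : Finset α) := hsteq ▸ hv
        rcases Finset.mem_insert.1 this with h | h
        · exact h ▸ hstN
        · exact (Finset.mem_singleton.1 h) ▸ htN
      calc (F.filter (fun B => x ∉ B)).card
          ≤ ((Finset.powersetCard 2 ({b1, b2, c3} : Finset α)).image
              (fun P => insert y P)).card := Finset.card_le_card hsub
        _ ≤ (Finset.powersetCard 2 ({b1, b2, c3} : Finset α)).card := Finset.card_image_le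
        _ ≤ ({b1, b2, c3} : Finset α).card + 1 := by
            rw [Finset.card_powersetCard, hNcard]; decide

lemma cover2_final
    (hF : ∀ A ∈ F, ∀ B ∈ F, (A ∩ B).Nonempty)
    (x y p : α) (hxy : x ≠ y)
    (hcov : ∀ B ∈ F, x ∈ B ∨ y ∈ B)
    (h2cl : ∀ e ∈ F, e.card = 2 → e = {x, y})
    (h23 : ∀ B ∈ F, B.card = 2 ∨ B.card = 3)
    (hxV : ∃ A ∈ F, x ∈ A)
    (hpx : p ≠ x) (hpall : ∀ B ∈ F.filter (fun B => x ∈ B ∧ y ∉ B), p ∈ B)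
    (hle : (F.filter (fun B => y ∈ B ∧ x ∉ B)).card ≤
      (F.filter (fun B => x ∈ B ∧ y ∉ B)).card) :
    Sterb F := by
  classical
  set Tx := F.filter (fun B => x ∈ B ∧ y ∉ B) with hTxdef
  have hTx := txprops hxy h2cl h23
  have hf1 : ∀ B ∈ Tx, ((B.erase x).erase p).card = 1 := by
    intro B hB
    obtain ⟨hBF, hx, hy, h3⟩ := hTx B hB
    rw [Finset.card_erase_of_mem (Finset.mem_erase.2 ⟨hpx, hpall B hB⟩),
      Finset.card_erase_of_mem hx, h3]
  have hrec : ∀ B ∈ Tx, B = insert x (insert p ((B.erase x).erase p)) := by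
    intro B hB
    obtain ⟨hBF, hx, hy, h3⟩ := hTx B hB
    rw [Finset.insert_erase (Finset.mem_erase.2 ⟨hpx, hpall B hB⟩), Finset.insert_erase hx]
  refine ⟨x, Tx.biUnion (fun B => (B.erase x).erase p), hxV, ?_, ?_⟩
  · intro u hu
    obtain ⟨B, hB, hmem⟩ := Finset.mem_biUnion.1 hu
    obtain ⟨hBF, hx, hy, h3⟩ := hTx B hB
    have hup : u ≠ p := (Finset.mem_erase.1 hmem).1
    have hux : u ≠ x := (Finset.mem_erase.1 (Finset.mem_of_mem_erase hmem)).1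
    have huB : u ∈ B := Finset.mem_of_mem_erase (Finset.mem_of_mem_erase hmem)
    have huy : u ≠ y := fun h => hy (h ▸ huB)
    exact ⟨hux, pair_not_mem hux huy h2cl, B, hBF, hx, huB⟩
  · have hNcard : (Tx.biUnion (fun B => (B.erase x).erase p)).card = Tx.card := by
      apply biUnion_card_of_inj hf1
      intro B hB B' hB' heq
      rw [hrec B hB, hrec B' hB', heq]
    rw [hNcard, filter_cover_eq hcov]
    omega

lemma cover2
    (hF : ∀ A ∈ F, ∀ B ∈ F, (A ∩ B).Nonempty)
    (hnc : ∀ a : α, ∃ B ∈ F, a ∉ B)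
    (hm2 : ∀ a : α, (∃ A ∈ F, a ∈ A) → 2 ≤ (F.filter (fun B => a ∉ B)).card)
    (x y : α) (hxy : x ≠ y)
    (hcov : ∀ B ∈ F, x ∈ B ∨ y ∈ B)
    (h2cl : ∀ e ∈ F, e.card = 2 → e = {x, y})
    (h23 : ∀ B ∈ F, B.card = 2 ∨ B.card = 3) :
    Sterb F := by
  classical
  have hxV : ∃ A ∈ F, x ∈ A := by
    obtain ⟨B, hB, hBy⟩ := hnc y
    exact ⟨B, hB, (hcov B hB).resolve_right hBy⟩
  have hyV : ∃ A ∈ F, y ∈ A := by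
    obtain ⟨B, hB, hBx⟩ := hnc x
    exact ⟨B, hB, (hcov B hB).resolve_left hBx⟩
  have hcov' : ∀ B ∈ F, y ∈ B ∨ x ∈ B := fun B hB => (hcov B hB).symm
  have h2cl' : ∀ e ∈ F, e.card = 2 → e = {y, x} := by
    intro e he hec
    rw [h2cl e he hec, Finset.pair_comm]
  have hTy2 : 2 ≤ (F.filter (fun B => y ∈ B ∧ x ∉ B)).card := by
    rw [← filter_cover_eq hcov]
    exact hm2 x hxV
  have hTx2 : 2 ≤ (F.filter (fun B => x ∈ B ∧ y ∉ B)).card := by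
    rw [← filter_cover_eq hcov']
    exact hm2 y hyV
  by_cases hpx : ∃ p : α, p ≠ x ∧ ∀ B ∈ F.filter (fun B => x ∈ B ∧ y ∉ B), p ∈ B
  · by_cases hpy : ∃ q : α, q ≠ y ∧ ∀ B ∈ F.filter (fun B => y ∈ B ∧ x ∉ B), q ∈ B
    · obtain ⟨p, hp1, hp2⟩ := hpx
      obtain ⟨q, hq1, hq2⟩ := hpy
      rcases le_total ((F.filter (fun B => y ∈ B ∧ x ∉ B)).card)
          ((F.filter (fun B => x ∈ B ∧ y ∉ B)).card) with h | h
      · exact cover2_final hF x y p hxy hcov h2cl h23 hxV hp1 hp2 h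
      · exact cover2_final hF y x q (Ne.symm hxy) hcov' h2cl' h23 hyV hq1 hq2 h
    · push_neg at hpy
      refine cover2_side hF y x (Ne.symm hxy) hcov' h2cl' h23 hyV
        (Finset.card_pos.1 (by omega)) ?_
      intro q hq
      exact hpy q hq
  · push_neg at hpx
    refine cover2_side hF x y hxy hcov h2cl h23 hxV
      (Finset.card_pos.1 (by omega)) ?_
    intro p hp
    exact hpx p hp

lemma case_A3 (hne : F.Nonempty)
    (hF : ∀ A ∈ F, ∀ B ∈ F, (A ∩ B).Nonempty)
    (hm2 : ∀ a : α, (∃ A ∈ F, a ∈ A) → 2 ≤ (F.filter (fun B => a ∉ B)).card)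
    (hc3 : ∀ B ∈ F, B.card = 3)
    (hno2 : ∀ u v : α, ∃ B ∈ F, u ∉ B ∧ v ∉ B) :
    Sterb F := by
  classical
  set V := F.biUnion id with hVdef
  have hVne : V.Nonempty := by
    obtain ⟨B, hB⟩ := hne
    have hBne : B.Nonempty := Finset.card_pos.1 (by rw [hc3 B hB]; omega)
    obtain ⟨w, hw⟩ := hBne
    exact ⟨w, Finset.mem_biUnion.2 ⟨B, hB, hw⟩⟩
  obtain ⟨a, haV, hamax⟩ :=
    Finset.exists_max_image V (fun v => (F.filter (fun B => v ∈ B)).card) hVne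
  have haF : ∃ A ∈ F, a ∈ A := by
    rw [hVdef] at haV
    obtain ⟨B, hB, haB⟩ := Finset.mem_biUnion.1 haV
    exact ⟨B, hB, haB⟩
  set La := (F.filter (fun B => a ∈ B)).image (fun B => B.erase a) with hLadef
  set M := F.filter (fun B => a ∉ B) with hMdef
  have hLaprop : ∀ e ∈ La, e.card = 2 ∧ a ∉ e ∧ insert a e ∈ F := by
    intro e he
    rw [hLadef, Finset.mem_image] at he
    obtain ⟨B, hB, hBe⟩ := he
    rw [Finset.mem_filter] at hB
    refine ⟨?_, ?_, ?_⟩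
    · rw [← hBe, Finset.card_erase_of_mem hB.2, hc3 B hB.1]
    · rw [← hBe]; exact Finset.notMem_erase a B
    · rw [← hBe, Finset.insert_erase hB.2]; exact hB.1
  have hLacard : La.card = (F.filter (fun B => a ∈ B)).card := by
    rw [hLadef]
    apply Finset.card_image_of_injOn
    intro B hB B' hB' heq
    rw [Finset.mem_coe, Finset.mem_filter] at hB hB'
    have heq' : B.erase a = B'.erase a := heq
    rw [← Finset.insert_erase hB.2, ← Finset.insert_erase hB'.2, heq']
  have hLane : La.Nonempty := by
    obtain ⟨A, hA, haA⟩ := haF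
    exact ⟨A.erase a, by
      rw [hLadef, Finset.mem_image]
      exact ⟨A, Finset.mem_filter.2 ⟨hA, haA⟩, rfl⟩⟩
  have hBcov : ∀ B ∈ F, a ∉ B → ∀ e ∈ La, ∃ w, w ∈ e ∧ w ∈ B := by
    intro B hB hBa e he
    obtain ⟨w, hw1, hw2⟩ := inter_elt hF ((hLaprop e he).2.2) hB
    rcases Finset.mem_insert.1 hw1 with h | h
    · exact absurd (h ▸ hw2) hBa
    · exact ⟨w, h, hw2⟩
  have hVmem : ∀ (w : α) (B : Finset α), B ∈ F → w ∈ B → w ∈ V := fun w B hB hw =>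
    Finset.mem_biUnion.2 ⟨B, hB, hw⟩
  have hdegmax : ∀ v ∈ V, (F.filter (fun B => v ∈ B)).card ≤ La.card := by
    intro v hv; rw [hLacard]; exact hamax v hv
  have hMcard2 : 2 ≤ M.card := hm2 a haF
  have hgoodlink : ∀ u : α, (∃ e ∈ La, u ∈ e) →
      u ≠ a ∧ ({a, u} : Finset α) ∉ F ∧ ∃ A ∈ F, a ∈ A ∧ u ∈ A := by
    intro u ⟨e, he, hue⟩
    obtain ⟨hec, hae, hins⟩ := hLaprop e he
    refine ⟨fun h => hae (h ▸ hue), ?_, insert a e, hins, Finset.mem_insert_self a _,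
      Finset.mem_insert_of_mem hue⟩
    intro hin
    have h3 := hc3 _ hin
    have h2 : ({a, u} : Finset α).card ≤ 2 :=
      le_trans (Finset.card_insert_le _ _) (by simp)
    omega
  have hlinkmem : ∀ (u : α) (e : Finset α), e ∈ La → u ∈ e → u ∈ V := by
    intro u e he hue
    exact hVmem u _ ((hLaprop e he).2.2) (Finset.mem_insert_of_mem hue)
  have hcnt : ∀ x, x ≠ a → x ∈ V →
      (M.filter (fun B => x ∈ B)).card + (La.filter (fun e => x ∈ e)).card ≤ La.card := by
    intro x hxa hxV
    have himg : La.filter (fun e => x ∈ e) =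
        (F.filter (fun B => a ∈ B ∧ x ∈ B)).image (fun B => B.erase a) := by
      ext e
      constructor
      · intro he
        rw [Finset.mem_filter] at he
        obtain ⟨heL, hxe⟩ := he
        rw [hLadef, Finset.mem_image] at heL
        obtain ⟨B, hB, hBe⟩ := heL
        rw [Finset.mem_filter] at hB
        refine Finset.mem_image.2 ⟨B, Finset.mem_filter.2 ⟨hB.1, hB.2, ?_⟩, hBe⟩
        exact Finset.mem_of_mem_erase (hBe ▸ hxe)
      · intro he
        rw [Finset.mem_image] at he
        obtain ⟨B, hB, hBe⟩ := he
        rw [Finset.mem_filter] at hB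
        obtain ⟨hBF, haB, hxB⟩ := hB
        rw [Finset.mem_filter]
        constructor
        · rw [hLadef, Finset.mem_image]
          exact ⟨B, Finset.mem_filter.2 ⟨hBF, haB⟩, hBe⟩
        · rw [← hBe]; exact Finset.mem_erase.2 ⟨hxa, hxB⟩
    have himgc : (La.filter (fun e => x ∈ e)).card =
        (F.filter (fun B => a ∈ B ∧ x ∈ B)).card := by
      rw [himg]
      apply Finset.card_image_of_injOn
      intro B hB B' hB' heq
      rw [Finset.mem_coe, Finset.mem_filter] at hB hB'
      have heq' : B.erase a = B'.erase a := heq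
      rw [← Finset.insert_erase hB.2.1, ← Finset.insert_erase hB'.2.1, heq']
    have hdisj : Disjoint (M.filter (fun B => x ∈ B))
        (F.filter (fun B => a ∈ B ∧ x ∈ B)) := by
      rw [Finset.disjoint_left]
      intro B hB hB'
      rw [hMdef, Finset.mem_filter, Finset.mem_filter] at hB
      rw [Finset.mem_filter] at hB'
      exact hB.1.2 hB'.2.1
    have hsub : M.filter (fun B => x ∈ B) ∪ F.filter (fun B => a ∈ B ∧ x ∈ B) ⊆
        F.filter (fun B => x ∈ B) := by
      intro B hB
      rcases Finset.mem_union.1 hB with h | h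
      · rw [hMdef, Finset.mem_filter, Finset.mem_filter] at h
        exact Finset.mem_filter.2 ⟨h.1.1, h.2⟩
      · rw [Finset.mem_filter] at h
        exact Finset.mem_filter.2 ⟨h.1, h.2.2⟩
    have := Finset.card_le_card hsub
    rw [Finset.card_union_of_disjoint hdisj] at this
    have := hdegmax x hxV
    omega
  -- dispatch on the structure of the link of a
  by_cases ht1 : ∃ u, ∀ e ∈ La, u ∈ e
  · -- star link: contradiction
    exfalso
    obtain ⟨u, hu⟩ := ht1
    obtain ⟨e0, he0⟩ := hLane
    have huV : u ∈ V := hlinkmem u e0 he0 (hu e0 he0)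
    have hua : u ≠ a := (hgoodlink u ⟨e0, he0, hu e0 he0⟩).1
    -- every member containing a contains u
    have hall : ∀ B ∈ F, a ∈ B → u ∈ B := by
      intro B hB haB
      have heB : B.erase a ∈ La := by
        rw [hLadef, Finset.mem_image]
        exact ⟨B, Finset.mem_filter.2 ⟨hB, haB⟩, rfl⟩
      exact Finset.mem_of_mem_erase (hu _ heB)
    -- no member avoiding a contains u
    have hMu : ∀ B ∈ F, a ∉ B → u ∉ B := by
      intro B hB hBa hBu
      have hsub : insert B (F.filter (fun B => a ∈ B)) ⊆ F.filter (fun B => u ∈ B) := by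
        intro B' hB'
        rcases Finset.mem_insert.1 hB' with h | h
        · exact h ▸ Finset.mem_filter.2 ⟨hB, hBu⟩
        · rw [Finset.mem_filter] at h
          exact Finset.mem_filter.2 ⟨h.1, hall B' h.1 h.2⟩
      have hBnot : B ∉ F.filter (fun B => a ∈ B) := by
        rw [Finset.mem_filter]; exact fun h => hBa h.2
      have h1 := Finset.card_le_card hsub
      rw [Finset.card_insert_of_notMem hBnot] at h1
      have h2 := hdegmax u huV
      omega
    -- far endpoints
    set S := La.biUnion (fun e => e.erase u) with hSdef
    have hScard : S.card = La.card := by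
      rw [hSdef]
      apply biUnion_card_of_inj
      · intro e he
        rw [Finset.card_erase_of_mem (hu e he), (hLaprop e he).1]
      · intro e he e' he' heq
        rw [← Finset.insert_erase (hu e he), ← Finset.insert_erase (hu e' he'), heq]
    obtain ⟨B1, hB1m, B2, hB2m, hB12⟩ := Finset.one_lt_card.1 (by omega : 1 < M.card)
    rw [hMdef, Finset.mem_filter] at hB1m hB2m
    have hSB : ∀ B ∈ F, a ∉ B → S ⊆ B := by
      intro B hB hBa w hw
      rw [hSdef] at hw
      obtain ⟨e, he, hwe⟩ := Finset.mem_biUnion.1 hw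
      obtain ⟨v, hve, hvB⟩ := hBcov B hB hBa e he
      have hvu : v ≠ u := fun h => hMu B hB hBa (h ▸ hvB)
      -- e has two elements u and (the far one); both v and w are the far one
      obtain ⟨f, hfu, hfeq⟩ := second (hLaprop e he).1 (hu e he)
      have hvf : v = f := by
        have : v ∈ ({u, f} : Finset α) := hfeq ▸ hve
        rcases Finset.mem_insert.1 this with h | h
        · exact absurd h hvu
        · exact Finset.mem_singleton.1 h
      have hwf : w = f := by
        have : w ∈ ({u, f} : Finset α) := hfeq ▸ Finset.mem_of_mem_erase hwe
        rcases Finset.mem_insert.1 this with h | h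
        · exact absurd h (Finset.mem_erase.1 hwe).1
        · exact Finset.mem_singleton.1 h
      rw [hwf, ← hvf]; exact hvB
    have hS3 : S.card ≤ 3 := by
      have := Finset.card_le_card (hSB B1 hB1m.1 hB1m.2)
      rw [hc3 B1 hB1m.1] at this; exact this
    have hLa1 : 1 ≤ La.card := Finset.card_pos.2 ⟨e0, he0⟩
    by_cases hd3 : La.card = 3
    · -- B1 = S = B2
      apply hB12
      have h1 : B1 = S := (Finset.eq_of_subset_of_card_le (hSB B1 hB1m.1 hB1m.2)
        (by rw [hScard, hd3, hc3 B1 hB1m.1])).symm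
      have h2 : B2 = S := (Finset.eq_of_subset_of_card_le (hSB B2 hB2m.1 hB2m.2)
        (by rw [hScard, hd3, hc3 B2 hB2m.1])).symm
      rw [h1, h2]
    · -- d ≤ 2 : a far endpoint has degree ≥ 3 > d
      have hd2 : La.card ≤ 2 := by omega
      have hSne : S.Nonempty := Finset.card_pos.1 (by omega)
      obtain ⟨s, hs⟩ := hSne
      rw [hSdef] at hs
      obtain ⟨e, he, hse⟩ := Finset.mem_biUnion.1 hs
      have hsB1 : s ∈ B1 := hSB B1 hB1m.1 hB1m.2 (by rw [hSdef]; exact hs)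
      have hsB2 : s ∈ B2 := hSB B2 hB2m.1 hB2m.2 (by rw [hSdef]; exact hs)
      set A1 := insert a e with hA1def
      have hA1F : A1 ∈ F := (hLaprop e he).2.2
      have hsA1 : s ∈ A1 := Finset.mem_insert_of_mem (Finset.mem_of_mem_erase hse)
      have hA1B1 : A1 ≠ B1 := by
        intro h
        exact hB1m.2 (h ▸ Finset.mem_insert_self a e)
      have hA1B2 : A1 ≠ B2 := by
        intro h
        exact hB2m.2 (h ▸ Finset.mem_insert_self a e)
      have hsubdeg : insert A1 (insert B1 ({B2} : Finset (Finset α))) ⊆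
          F.filter (fun B => s ∈ B) := by
        intro B hB
        rcases Finset.mem_insert.1 hB with h | h
        · exact h ▸ Finset.mem_filter.2 ⟨hA1F, hsA1⟩
        rcases Finset.mem_insert.1 h with h | h
        · exact h ▸ Finset.mem_filter.2 ⟨hB1m.1, hsB1⟩
        · exact (Finset.mem_singleton.1 h) ▸ Finset.mem_filter.2 ⟨hB2m.1, hsB2⟩
      have hc : (insert A1 (insert B1 ({B2} : Finset (Finset α)))).card = 3 := by
        rw [Finset.card_insert_of_notMem (by
          intro h
          rcases Finset.mem_insert.1 h with h | h
          · exact hA1B1 h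
          · exact hA1B2 (Finset.mem_singleton.1 h)),
          Finset.card_insert_of_notMem (by simpa using hB12), Finset.card_singleton]
      have h1 := Finset.card_le_card hsubdeg
      have h2 := hdegmax s (hVmem s B1 hB1m.1 hsB1)
      omega
  · push_neg at ht1
    by_cases ht2 : ∃ u v : α, u ≠ v ∧ ∀ e ∈ La, u ∈ e ∨ v ∈ e
    · obtain ⟨u, v, huv, hcov2L⟩ := ht2
      have huvE : ∀ e ∈ La, ¬(u ∈ e ∧ v ∈ e) := by
        rintro e he ⟨hue, hve⟩
        have heuv : e = {u, v} := by
          refine (Finset.eq_of_subset_of_card_le ?_ ?_).symm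
          · intro w hw
            rcases Finset.mem_insert.1 hw with h | h
            · exact h ▸ hue
            · exact (Finset.mem_singleton.1 h) ▸ hve
          · rw [(hLaprop e he).1, Finset.card_insert_of_notMem (by simpa using huv),
              Finset.card_singleton]
        obtain ⟨Bq, hBqF, hBqu, hBqv⟩ := hno2 u v
        obtain ⟨w, hw1, hw2⟩ := inter_elt hF ((hLaprop e he).2.2) hBqF
        have hwa : w = a := by
          rcases Finset.mem_insert.1 hw1 with h | h
          · exact h
          · rw [heuv] at h
            rcases Finset.mem_insert.1 h with h' | h'
            · exact absurd (h' ▸ hw2) hBqu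
            · exact absurd ((Finset.mem_singleton.1 h') ▸ hw2) hBqv
        have heBq : Bq.erase a ∈ La := by
          rw [hLadef, Finset.mem_image]
          exact ⟨Bq, Finset.mem_filter.2 ⟨hBqF, hwa ▸ hw2⟩, rfl⟩
        rcases hcov2L _ heBq with h | h
        · exact hBqu (Finset.mem_of_mem_erase h)
        · exact hBqv (Finset.mem_of_mem_erase h)
      set Lu := La.filter (fun e => u ∈ e) with hLudef
      set Lv := La.filter (fun e => v ∈ e) with hLvdef
      have hLasum : La.card = Lu.card + Lv.card := by
        rw [hLudef, hLvdef]
        rw [← Finset.card_union_of_disjoint (by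
          rw [Finset.disjoint_left]
          intro e he he'
          rw [Finset.mem_filter] at he he'
          exact huvE e he.1 ⟨he.2, he'.2⟩)]
        congr 1
        ext e
        simp only [Finset.mem_union, Finset.mem_filter]
        constructor
        · intro he
          rcases hcov2L e he with h | h
          · exact Or.inl ⟨he, h⟩
          · exact Or.inr ⟨he, h⟩
        · rintro (⟨h, _⟩ | ⟨h, _⟩) <;> exact h
      have hLune : Lu.Nonempty := by
        obtain ⟨e, he, hve⟩ := ht1 v
        refine ⟨e, Finset.mem_filter.2 ⟨he, ?_⟩⟩
        rcases hcov2L e he with h | h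
        · exact h
        · exact absurd h hve
      have hLvne : Lv.Nonempty := by
        obtain ⟨e, he, hue⟩ := ht1 u
        refine ⟨e, Finset.mem_filter.2 ⟨he, ?_⟩⟩
        rcases hcov2L e he with h | h
        · exact absurd h hue
        · exact h
      set Eu := Lu.biUnion (fun e => e.erase u) with hEudef
      set Ev := Lv.biUnion (fun e => e.erase v) with hEvdef
      have hLuprop : ∀ e ∈ Lu, e ∈ La ∧ u ∈ e := by
        intro e he
        rw [hLudef, Finset.mem_filter] at he
        exact he
      have hLvprop : ∀ e ∈ Lv, e ∈ La ∧ v ∈ e := by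
        intro e he
        rw [hLvdef, Finset.mem_filter] at he
        exact he
      have hEucard : Eu.card = Lu.card := by
        rw [hEudef]
        apply biUnion_card_of_inj
        · intro e he
          rw [Finset.card_erase_of_mem (hLuprop e he).2, (hLaprop e (hLuprop e he).1).1]
        · intro e he e' he' heq
          rw [← Finset.insert_erase (hLuprop e he).2, ← Finset.insert_erase (hLuprop e' he').2,
            heq]
      have hEvcard : Ev.card = Lv.card := by
        rw [hEvdef]
        apply biUnion_card_of_inj
        · intro e he
          rw [Finset.card_erase_of_mem (hLvprop e he).2, (hLaprop e (hLvprop e he).1).1]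
        · intro e he e' he' heq
          rw [← Finset.insert_erase (hLvprop e he).2, ← Finset.insert_erase (hLvprop e' he').2,
            heq]
      have hEu_edge : ∀ x, x ∈ Eu → ({u, x} : Finset α) ∈ La ∧ x ≠ u ∧ x ≠ v ∧ x ≠ a := by
        intro x hx
        rw [hEudef] at hx
        obtain ⟨e, he, hxe⟩ := Finset.mem_biUnion.1 hx
        obtain ⟨heLa, hue⟩ := hLuprop e he
        have hxu : x ≠ u := (Finset.mem_erase.1 hxe).1
        have hxB : x ∈ e := Finset.mem_of_mem_erase hxe
        obtain ⟨f, hfu, hfeq⟩ := second (hLaprop e heLa).1 hue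
        have hxf : x = f := by
          have : x ∈ ({u, f} : Finset α) := hfeq ▸ hxB
          rcases Finset.mem_insert.1 this with h | h
          · exact absurd h hxu
          · exact Finset.mem_singleton.1 h
        have heq : e = {u, x} := by rw [hfeq, hxf]
        refine ⟨heq ▸ heLa, hxu, ?_, fun h => (hLaprop e heLa).2.1 (h ▸ hxB)⟩
        intro h
        exact huvE e heLa ⟨hue, h ▸ hxB⟩
      have hEv_edge : ∀ x, x ∈ Ev → ({v, x} : Finset α) ∈ La ∧ x ≠ v ∧ x ≠ u ∧ x ≠ a := by
        intro x hx
        rw [hEvdef] at hx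
        obtain ⟨e, he, hxe⟩ := Finset.mem_biUnion.1 hx
        obtain ⟨heLa, hve⟩ := hLvprop e he
        have hxv : x ≠ v := (Finset.mem_erase.1 hxe).1
        have hxB : x ∈ e := Finset.mem_of_mem_erase hxe
        obtain ⟨f, hfv, hfeq⟩ := second (hLaprop e heLa).1 hve
        have hxf : x = f := by
          have : x ∈ ({v, f} : Finset α) := hfeq ▸ hxB
          rcases Finset.mem_insert.1 this with h | h
          · exact absurd h hxv
          · exact Finset.mem_singleton.1 h
        have heq : e = {v, x} := by rw [hfeq, hxf]
        refine ⟨heq ▸ heLa, hxv, ?_, fun h => (hLaprop e heLa).2.1 (h ▸ hxB)⟩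
        intro h
        exact huvE e heLa ⟨h ▸ hxB, hve⟩
      have hfaru : ∀ B ∈ F, a ∉ B → u ∉ B → Eu ⊆ B := by
        intro B hB hBa hBu x hx
        obtain ⟨hedge, hxu, hxv, hxa⟩ := hEu_edge x hx
        obtain ⟨w, hw1, hw2⟩ := hBcov B hB hBa _ hedge
        rcases Finset.mem_insert.1 hw1 with h | h
        · exact absurd (h ▸ hw2) hBu
        · exact (Finset.mem_singleton.1 h) ▸ hw2
      have hfarv : ∀ B ∈ F, a ∉ B → v ∉ B → Ev ⊆ B := by
        intro B hB hBa hBv x hx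
        obtain ⟨hedge, hxv, hxu, hxa⟩ := hEv_edge x hx
        obtain ⟨w, hw1, hw2⟩ := hBcov B hB hBa _ hedge
        rcases Finset.mem_insert.1 hw1 with h | h
        · exact absurd (h ▸ hw2) hBv
        · exact (Finset.mem_singleton.1 h) ▸ hw2
      -- u, v are vertices different from a
      obtain ⟨eu0, heu0⟩ := hLune
      obtain ⟨ev0, hev0⟩ := hLvne
      have hulink : ∃ e ∈ La, u ∈ e := ⟨eu0, (hLuprop eu0 heu0).1, (hLuprop eu0 heu0).2⟩
      have hvlink : ∃ e ∈ La, v ∈ e := ⟨ev0, (hLvprop ev0 hev0).1, (hLvprop ev0 hev0).2⟩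
      have hugood := hgoodlink u hulink
      have hvgood := hgoodlink v hvlink
      have huV : u ∈ V := hlinkmem u eu0 (hLuprop eu0 heu0).1 (hLuprop eu0 heu0).2
      have hvV : v ∈ V := hlinkmem v ev0 (hLvprop ev0 hev0).1 (hLvprop ev0 hev0).2
      -- counting at u and v
      have hMucount : (M.filter (fun B => u ∈ B)).card ≤ Lv.card := by
        have := hcnt u hugood.1 huV
        rw [← hLudef] at this
        omega
      have hMvcount : (M.filter (fun B => v ∈ B)).card ≤ Lu.card := by
        have := hcnt v hvgood.1 hvV
        rw [← hLvdef] at this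
        omega
      -- B* avoiding u and v
      obtain ⟨Bs, hBsF, hBsu, hBsv⟩ := hno2 u v
      have hBsa : a ∉ Bs := by
        intro h
        have heBs : Bs.erase a ∈ La := by
          rw [hLadef, Finset.mem_image]
          exact ⟨Bs, Finset.mem_filter.2 ⟨hBsF, h⟩, rfl⟩
        rcases hcov2L _ heBs with h' | h'
        · exact hBsu (Finset.mem_of_mem_erase h')
        · exact hBsv (Finset.mem_of_mem_erase h')
      have hUBs : Eu ∪ Ev ⊆ Bs := by
        intro x hx
        rcases Finset.mem_union.1 hx with h | h
        · exact hfaru Bs hBsF hBsa hBsu h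
        · exact hfarv Bs hBsF hBsa hBsv h
      have hU3 : (Eu ∪ Ev).card ≤ 3 := by
        have := Finset.card_le_card hUBs
        rw [hc3 Bs hBsF] at this
        exact this
      have hEuU : Eu ⊆ Eu ∪ Ev := Finset.subset_union_left
      have hEvU : Ev ⊆ Eu ∪ Ev := Finset.subset_union_right
      have hEune : Eu.Nonempty := by
        rw [← Finset.card_pos, hEucard, Finset.card_pos]
        exact ⟨eu0, heu0⟩
      have hEvne : Ev.Nonempty := by
        rw [← Finset.card_pos, hEvcard, Finset.card_pos]
        exact ⟨ev0, hev0⟩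
      -- the good set N
      have huU : u ∉ Eu ∪ Ev := by
        intro h
        rcases Finset.mem_union.1 h with h' | h'
        · exact (hEu_edge u h').2.1 rfl
        · exact (hEv_edge u h').2.2.1 rfl
      have hvU : v ∉ Eu ∪ Ev := by
        intro h
        rcases Finset.mem_union.1 h with h' | h'
        · exact (hEu_edge v h').2.2.1 rfl
        · exact (hEv_edge v h').2.1 rfl
      have hNcard : (insert u (insert v (Eu ∪ Ev))).card = (Eu ∪ Ev).card + 2 := by
        rw [Finset.card_insert_of_notMem (by
          intro h
          rcases Finset.mem_insert.1 h with h' | h'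
          · exact huv h'
          · exact huU h'), Finset.card_insert_of_notMem hvU]
      refine ⟨a, insert u (insert v (Eu ∪ Ev)), haF, ?_, ?_⟩
      · intro w hw
        rcases Finset.mem_insert.1 hw with h | h
        · exact h ▸ hugood
        rcases Finset.mem_insert.1 h with h | h
        · exact h ▸ hvgood
        rcases Finset.mem_union.1 h with h' | h'
        · exact hgoodlink w ⟨{u, w}, (hEu_edge w h').1,
            Finset.mem_insert_of_mem (Finset.mem_singleton_self w)⟩
        · exact hgoodlink w ⟨{v, w}, (hEv_edge w h').1,
            Finset.mem_insert_of_mem (Finset.mem_singleton_self w)⟩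
      · rw [hNcard, ← hMdef]
        -- target : M.card ≤ (Eu ∪ Ev).card + 3
        have hMieq : (M.filter (fun B => u ∈ B ∧ v ∈ B)).card +
            (M.filter (fun B => ¬(u ∈ B ∧ v ∈ B))).card = M.card :=
          Finset.card_filter_add_card_filter_not _
        have hMprop : ∀ B ∈ M, B ∈ F ∧ a ∉ B := by
          intro B hB
          rw [hMdef, Finset.mem_filter] at hB
          exact hB
        have hMi_le : (M.filter (fun B => u ∈ B ∧ v ∈ B)).card +
            (M.filter (fun B => u ∈ B ∧ v ∉ B)).card ≤ Ev.card := by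
          have hd : Disjoint (M.filter (fun B => u ∈ B ∧ v ∈ B))
              (M.filter (fun B => u ∈ B ∧ v ∉ B)) := by
            rw [Finset.disjoint_left]
            intro B h1 h2
            exact (Finset.mem_filter.1 h2).2.2 (Finset.mem_filter.1 h1).2.2
          have hsub : (M.filter (fun B => u ∈ B ∧ v ∈ B)) ∪
              (M.filter (fun B => u ∈ B ∧ v ∉ B)) ⊆ M.filter (fun B => u ∈ B) := by
            intro B hB
            rcases Finset.mem_union.1 hB with h | h
            · exact Finset.mem_filter.2 ⟨(Finset.mem_filter.1 h).1, (Finset.mem_filter.1 h).2.1⟩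
            · exact Finset.mem_filter.2 ⟨(Finset.mem_filter.1 h).1, (Finset.mem_filter.1 h).2.1⟩
          have := Finset.card_le_card hsub
          rw [Finset.card_union_of_disjoint hd] at this
          rw [hEvcard]
          omega
        have hMiii_le : (M.filter (fun B => u ∈ B ∧ v ∈ B)).card +
            (M.filter (fun B => v ∈ B ∧ u ∉ B)).card ≤ Eu.card := by
          have hd : Disjoint (M.filter (fun B => u ∈ B ∧ v ∈ B))
              (M.filter (fun B => v ∈ B ∧ u ∉ B)) := by
            rw [Finset.disjoint_left]
            intro B h1 h2
            exact (Finset.mem_filter.1 h2).2.2 (Finset.mem_filter.1 h1).2.1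
          have hsub : (M.filter (fun B => u ∈ B ∧ v ∈ B)) ∪
              (M.filter (fun B => v ∈ B ∧ u ∉ B)) ⊆ M.filter (fun B => v ∈ B) := by
            intro B hB
            rcases Finset.mem_union.1 hB with h | h
            · exact Finset.mem_filter.2 ⟨(Finset.mem_filter.1 h).1, (Finset.mem_filter.1 h).2.2⟩
            · exact Finset.mem_filter.2 ⟨(Finset.mem_filter.1 h).1, (Finset.mem_filter.1 h).2.1⟩
          have := Finset.card_le_card hsub
          rw [Finset.card_union_of_disjoint hd] at this
          rw [hEucard]
          omega
        have hU12 : 1 ≤ (Eu ∪ Ev).card := by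
          obtain ⟨x, hx⟩ := hEune
          exact Finset.card_pos.2 ⟨x, hEuU hx⟩
      -- main case analysis on (Eu ∪ Ev).card
        by_cases hU3e : (Eu ∪ Ev).card = 3
        · -- type-iv members are all equal to Eu ∪ Ev
          have hMiv1 : (M.filter (fun B => u ∉ B ∧ v ∉ B)).card ≤ 1 := by
            have hsub : M.filter (fun B => u ∉ B ∧ v ∉ B) ⊆ {Eu ∪ Ev} := by
              intro B hB
              rw [Finset.mem_filter] at hB
              obtain ⟨hBM, hBu, hBv⟩ := hB
              obtain ⟨hBF, hBa⟩ := hMprop B hBM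
              have hsub' : Eu ∪ Ev ⊆ B := by
                intro x hx
                rcases Finset.mem_union.1 hx with h | h
                · exact hfaru B hBF hBa hBu h
                · exact hfarv B hBF hBa hBv h
              rw [Finset.mem_singleton]
              exact (Finset.eq_of_subset_of_card_le hsub' (by rw [hc3 B hBF, hU3e])).symm
            exact le_trans (Finset.card_le_card hsub) (by simp)
          have hrest : (M.filter (fun B => ¬(u ∈ B ∧ v ∈ B))).card ≤
              (M.filter (fun B => u ∈ B ∧ v ∉ B)).card +
              ((M.filter (fun B => v ∈ B ∧ u ∉ B)).card +
               (M.filter (fun B => u ∉ B ∧ v ∉ B)).card) := by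
            have hsub : M.filter (fun B => ¬(u ∈ B ∧ v ∈ B)) ⊆
                (M.filter (fun B => u ∈ B ∧ v ∉ B)) ∪
                ((M.filter (fun B => v ∈ B ∧ u ∉ B)) ∪
                 (M.filter (fun B => u ∉ B ∧ v ∉ B))) := by
              intro B hB
              rw [Finset.mem_filter] at hB
              obtain ⟨hBM, hBnuv⟩ := hB
              by_cases hu' : u ∈ B
              · by_cases hv' : v ∈ B
                · exact absurd ⟨hu', hv'⟩ hBnuv
                · exact Finset.mem_union_left _ (Finset.mem_filter.2 ⟨hBM, hu', hv'⟩)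
              · by_cases hv' : v ∈ B
                · exact Finset.mem_union_right _ (Finset.mem_union_left _
                    (Finset.mem_filter.2 ⟨hBM, hv', hu'⟩))
                · exact Finset.mem_union_right _ (Finset.mem_union_right _
                    (Finset.mem_filter.2 ⟨hBM, hu', hv'⟩))
            exact le_trans (Finset.card_le_card hsub)
              (le_trans (Finset.card_union_le _ _) (by
                have := Finset.card_union_le (M.filter (fun B => v ∈ B ∧ u ∉ B))
                  (M.filter (fun B => u ∉ B ∧ v ∉ B))
                omega))
          by_cases heuv5 : Eu.card + Ev.card ≤ 5
          · omega
          · -- Eu.card = Ev.card = 3, so types ii and iii are empty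
            have hEu3 : Eu.card = 3 := by
              have h1 := Finset.card_le_card hEuU
              have h2 := Finset.card_le_card hEvU
              omega
            have hEv3 : Ev.card = 3 := by
              have h1 := Finset.card_le_card hEuU
              have h2 := Finset.card_le_card hEvU
              omega
            have hMii0 : (M.filter (fun B => u ∈ B ∧ v ∉ B)).card = 0 := by
              rw [Finset.card_eq_zero]
              rw [Finset.eq_empty_iff_forall_notMem]
              intro B hB
              rw [Finset.mem_filter] at hB
              obtain ⟨hBM, hBu, hBv⟩ := hB
              obtain ⟨hBF, hBa⟩ := hMprop B hBM
              have hsub' : insert u Ev ⊆ B :=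
                Finset.insert_subset hBu (hfarv B hBF hBa hBv)
              have hcard : (insert u Ev).card = 4 := by
                rw [Finset.card_insert_of_notMem (fun h => (hEv_edge u h).2.2.1 rfl), hEv3]
              have := Finset.card_le_card hsub'
              rw [hc3 B hBF, hcard] at this
              omega
            have hMiii0 : (M.filter (fun B => v ∈ B ∧ u ∉ B)).card = 0 := by
              rw [Finset.card_eq_zero]
              rw [Finset.eq_empty_iff_forall_notMem]
              intro B hB
              rw [Finset.mem_filter] at hB
              obtain ⟨hBM, hBv, hBu⟩ := hB
              obtain ⟨hBF, hBa⟩ := hMprop B hBM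
              have hsub' : insert v Eu ⊆ B :=
                Finset.insert_subset hBv (hfaru B hBF hBa hBu)
              have hcard : (insert v Eu).card = 4 := by
                rw [Finset.card_insert_of_notMem (fun h => (hEu_edge v h).2.2.1 rfl), hEu3]
              have := Finset.card_le_card hsub'
              rw [hc3 B hBF, hcard] at this
              omega
            omega
        · -- (Eu ∪ Ev).card ≤ 2
          have hle2 : (Eu ∪ Ev).card ≤ 2 := by omega
          by_cases hU1e : (Eu ∪ Ev).card = 1
          · -- contradiction with ht1
            exfalso
            obtain ⟨w0, hw0⟩ := Finset.card_eq_one.1 hU1e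
            obtain ⟨e, he, hwe⟩ := ht1 w0
            apply hwe
            rcases hcov2L e he with h | h
            · have heLu : e ∈ Lu := Finset.mem_filter.2 ⟨he, h⟩
              obtain ⟨f, hfu, hfeq⟩ := second (hLaprop e he).1 h
              have hfEu : f ∈ Eu := by
                rw [hEudef]
                refine Finset.mem_biUnion.2 ⟨e, heLu, Finset.mem_erase.2 ⟨hfu, ?_⟩⟩
                rw [hfeq]
                exact Finset.mem_insert_of_mem (Finset.mem_singleton_self f)
              have : f ∈ ({w0} : Finset α) := hw0 ▸ hEuU hfEu
              rw [Finset.mem_singleton.1 this] at hfeq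
              rw [hfeq]
              exact Finset.mem_insert_of_mem (Finset.mem_singleton_self w0)
            · have heLv : e ∈ Lv := Finset.mem_filter.2 ⟨he, h⟩
              obtain ⟨f, hfv, hfeq⟩ := second (hLaprop e he).1 h
              have hfEv : f ∈ Ev := by
                rw [hEvdef]
                refine Finset.mem_biUnion.2 ⟨e, heLv, Finset.mem_erase.2 ⟨hfv, ?_⟩⟩
                rw [hfeq]
                exact Finset.mem_insert_of_mem (Finset.mem_singleton_self f)
              have : f ∈ ({w0} : Finset α) := hw0 ▸ hEvU hfEv
              rw [Finset.mem_singleton.1 this] at hfeq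
              rw [hfeq]
              exact Finset.mem_insert_of_mem (Finset.mem_singleton_self w0)
          · -- (Eu ∪ Ev).card = 2
            have hU2 : (Eu ∪ Ev).card = 2 := by omega
            have hEule : Eu.card ≤ 2 := le_of_le_of_eq (Finset.card_le_card hEuU) hU2
            have hEvle : Ev.card ≤ 2 := le_of_le_of_eq (Finset.card_le_card hEvU) hU2
            have hLaeq : La.card = Eu.card + Ev.card := by
              rw [hEucard, hEvcard]; exact hLasum
            by_cases hshared : ∃ x, x ∈ Eu ∧ x ∈ Ev
            · obtain ⟨x, hxEu, hxEv⟩ := hshared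
              obtain ⟨hxedgeu, hxu, hxv, hxa⟩ := hEu_edge x hxEu
              obtain ⟨hxedgev, _, _, _⟩ := hEv_edge x hxEv
              have hxV : x ∈ V := hlinkmem x _ hxedgeu
                (Finset.mem_insert_of_mem (Finset.mem_singleton_self x))
              have hpairne : ({u, x} : Finset α) ≠ ({v, x} : Finset α) := by
                intro h
                have : u ∈ ({v, x} : Finset α) := h ▸ Finset.mem_insert_self u _
                rcases Finset.mem_insert.1 this with h' | h'
                · exact huv h'
                · exact hxu (Finset.mem_singleton.1 h').symm
              have hfilt2 : 2 ≤ (La.filter (fun e => x ∈ e)).card := by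
                have hsub : ({({u, x} : Finset α), ({v, x} : Finset α)} : Finset (Finset α)) ⊆
                    La.filter (fun e => x ∈ e) := by
                  intro e he
                  rcases Finset.mem_insert.1 he with h | h
                  · exact h ▸ Finset.mem_filter.2 ⟨hxedgeu,
                      Finset.mem_insert_of_mem (Finset.mem_singleton_self x)⟩
                  · exact (Finset.mem_singleton.1 h) ▸ Finset.mem_filter.2 ⟨hxedgev,
                      Finset.mem_insert_of_mem (Finset.mem_singleton_self x)⟩
                have hc : ({({u, x} : Finset α), ({v, x} : Finset α)} :
                    Finset (Finset α)).card = 2 := by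
                  rw [Finset.card_insert_of_notMem (by simpa using hpairne),
                    Finset.card_singleton]
                exact hc ▸ Finset.card_le_card hsub
              have hMx := hcnt x hxa hxV
              have hrest_sub : M.filter (fun B => ¬(u ∈ B ∧ v ∈ B)) ⊆
                  M.filter (fun B => x ∈ B) := by
                intro B hB
                rw [Finset.mem_filter] at hB
                obtain ⟨hBM, hBnuv⟩ := hB
                obtain ⟨hBF, hBa⟩ := hMprop B hBM
                refine Finset.mem_filter.2 ⟨hBM, ?_⟩
                by_cases hu' : u ∈ B
                · have hv' : v ∉ B := fun h => hBnuv ⟨hu', h⟩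
                  exact hfarv B hBF hBa hv' hxEv
                · exact hfaru B hBF hBa hu' hxEu
              have h1 := Finset.card_le_card hrest_sub
              omega
            · push_neg at hshared
              obtain ⟨x0, hx0⟩ := hEune
              obtain ⟨y0, hy0⟩ := hEvne
              obtain ⟨hx0edge, hx0u, hx0v, hx0a⟩ := hEu_edge x0 hx0
              obtain ⟨hy0edge, hy0v, hy0u, hy0a⟩ := hEv_edge y0 hy0
              have hx0V : x0 ∈ V := hlinkmem x0 _ hx0edge
                (Finset.mem_insert_of_mem (Finset.mem_singleton_self x0))
              have hy0V : y0 ∈ V := hlinkmem y0 _ hy0edge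
                (Finset.mem_insert_of_mem (Finset.mem_singleton_self y0))
              have hrest_sub : M.filter (fun B => ¬(u ∈ B ∧ v ∈ B)) ⊆
                  M.filter (fun B => x0 ∈ B) ∪ M.filter (fun B => y0 ∈ B) := by
                intro B hB
                rw [Finset.mem_filter] at hB
                obtain ⟨hBM, hBnuv⟩ := hB
                obtain ⟨hBF, hBa⟩ := hMprop B hBM
                by_cases hu' : u ∈ B
                · have hv' : v ∉ B := fun h => hBnuv ⟨hu', h⟩
                  exact Finset.mem_union_right _ (Finset.mem_filter.2
                    ⟨hBM, hfarv B hBF hBa hv' hy0⟩)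
                · exact Finset.mem_union_left _ (Finset.mem_filter.2
                    ⟨hBM, hfaru B hBF hBa hu' hx0⟩)
              have h1 := le_trans (Finset.card_le_card hrest_sub) (Finset.card_union_le _ _)
              have hMx0 := hcnt x0 hx0a hx0V
              have hMy0 := hcnt y0 hy0a hy0V
              have hfx0 : 1 ≤ (La.filter (fun e => x0 ∈ e)).card :=
                Finset.card_pos.2 ⟨{u, x0}, Finset.mem_filter.2 ⟨hx0edge,
                  Finset.mem_insert_of_mem (Finset.mem_singleton_self x0)⟩⟩
              have hfy0 : 1 ≤ (La.filter (fun e => y0 ∈ e)).card :=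
                Finset.card_pos.2 ⟨{v, y0}, Finset.mem_filter.2 ⟨hy0edge,
                  Finset.mem_insert_of_mem (Finset.mem_singleton_self y0)⟩⟩
              have hdisjE : Disjoint Eu Ev := by
                rw [Finset.disjoint_left]
                exact fun x hx hx' => hshared x hx hx'
              have hUeq : (Eu ∪ Ev).card = Eu.card + Ev.card :=
                Finset.card_union_of_disjoint hdisjE
              have hEupos : 0 < Eu.card := Finset.card_pos.2 ⟨x0, hx0⟩
              have hEvpos : 0 < Ev.card := Finset.card_pos.2 ⟨y0, hy0⟩
              omega
    · -- no 2-element cover of the link : t3 case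
      push_neg at ht2
      have hstar : ∀ p q : α, ∃ e, e ∈ La ∧ p ∉ e ∧ q ∉ e := by
        intro p q
        by_cases hpq : p = q
        · obtain ⟨e, he, hpe⟩ := ht1 p
          exact ⟨e, he, hpe, hpq ▸ hpe⟩
        · obtain ⟨e, he, hmm⟩ := ht2 p q hpq
          exact ⟨e, he, hmm.1, hmm.2⟩
      have hstar' := hstar
      choose estar hestar using hstar'
      set VL := La.biUnion id with hVLdef
      have hVLmem : ∀ (x : α) (e : Finset α), e ∈ La → x ∈ e → x ∈ VL := by
        intro x e he hx
        rw [hVLdef]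
        exact Finset.mem_biUnion.2 ⟨e, he, hx⟩
      have hedgeVL : ∀ e ∈ La, e ⊆ VL := fun e he x hx => hVLmem x e he hx
      have hVLgood : ∀ w ∈ VL, w ≠ a ∧ ({a, w} : Finset α) ∉ F ∧ ∃ A ∈ F, a ∈ A ∧ w ∈ A := by
        intro w hw
        rw [hVLdef] at hw
        obtain ⟨e, he, hwe⟩ := Finset.mem_biUnion.1 hw
        exact hgoodlink w ⟨e, he, hwe⟩
      obtain ⟨e1, he1⟩ := hLane
      obtain ⟨p, q, hpq, he1eq⟩ := Finset.card_eq_two.1 (hLaprop e1 he1).1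
      obtain ⟨e2, he2, hpe2, hqe2⟩ := hstar p q
      obtain ⟨r, s', hrs, he2eq⟩ := Finset.card_eq_two.1 (hLaprop e2 he2).1
      have hpe1 : p ∈ e1 := he1eq ▸ Finset.mem_insert_self p _
      have hqe1 : q ∈ e1 := he1eq ▸ Finset.mem_insert_of_mem (Finset.mem_singleton_self q)
      have hre2 : r ∈ e2 := he2eq ▸ Finset.mem_insert_self r _
      have hse2 : s' ∈ e2 := he2eq ▸ Finset.mem_insert_of_mem (Finset.mem_singleton_self s')
      have hdisj12 : Disjoint e1 e2 := by
        rw [Finset.disjoint_left]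
        intro x hx hx2
        have : x ∈ ({p, q} : Finset α) := he1eq ▸ hx
        rcases Finset.mem_insert.1 this with h | h
        · exact hpe2 (h ▸ hx2)
        · exact hqe2 ((Finset.mem_singleton.1 h) ▸ hx2)
      set V0 := e1 ∪ e2 with hV0def
      have hV0card : V0.card = 4 := by
        rw [hV0def, Finset.card_union_of_disjoint hdisj12, (hLaprop e1 he1).1,
          (hLaprop e2 he2).1]
      have hV0VL : V0 ⊆ VL := by
        rw [hV0def]
        exact Finset.union_subset (hedgeVL e1 he1) (hedgeVL e2 he2)
      have hMprop : ∀ B ∈ M, B ∈ F ∧ a ∉ B := by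
        intro B hB
        rw [hMdef, Finset.mem_filter] at hB
        exact hB
      have hthird : ∀ B ∈ M, ∀ x y : α, x ∈ B → y ∈ B → x ≠ y →
          ∃ g, B = {x, y, g} ∧ g ∈ estar x y ∧ g ≠ x ∧ g ≠ y := by
        intro B hBM x y hx hy hxy
        obtain ⟨hBF, hBa⟩ := hMprop B hBM
        obtain ⟨g, hgx, hgy, hBeq⟩ := third (hc3 B hBF) hx hy hxy
        obtain ⟨w, hwe, hwB⟩ := hBcov B hBF hBa _ (hestar x y).1
        have hwg : w = g := by
          have : w ∈ ({x, y, g} : Finset α) := hBeq ▸ hwB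
          rcases Finset.mem_insert.1 this with h | h
          · exact absurd (h ▸ hwe) (hestar x y).2.1
          rcases Finset.mem_insert.1 h with h | h
          · exact absurd (h ▸ hwe) (hestar x y).2.2
          · exact Finset.mem_singleton.1 h
        exact ⟨g, hBeq, hwg ▸ hwe, hgx, hgy⟩
      have hBxy : ∀ B ∈ M, ∃ x y, x ∈ e1 ∧ y ∈ e2 ∧ x ∈ B ∧ y ∈ B ∧ x ≠ y := by
        intro B hBM
        obtain ⟨hBF, hBa⟩ := hMprop B hBM
        obtain ⟨x, hxe, hxB⟩ := hBcov B hBF hBa e1 he1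
        obtain ⟨y, hye, hyB⟩ := hBcov B hBF hBa e2 he2
        exact ⟨x, y, hxe, hye, hxB, hyB,
          fun h => (Finset.disjoint_left.1 hdisj12 hxe) (h ▸ hye)⟩
      have hBVL : ∀ B ∈ M, B ⊆ VL := by
        intro B hBM
        obtain ⟨x, y, hxe, hye, hxB, hyB, hxy⟩ := hBxy B hBM
        obtain ⟨g, hBeq, hge, _, _⟩ := hthird B hBM x y hxB hyB hxy
        rw [hBeq]
        intro w hw
        rcases Finset.mem_insert.1 hw with h | h
        · exact h ▸ hVLmem x e1 he1 hxe
        rcases Finset.mem_insert.1 h with h | h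
        · exact h ▸ hVLmem y e2 he2 hye
        · exact (Finset.mem_singleton.1 h) ▸ hVLmem g _ (hestar x y).1 hge
      set Z := VL \ V0 with hZdef
      have hVLcard : VL.card = Z.card + 4 := by
        rw [hZdef, ← hV0card]
        exact (Finset.card_sdiff_add_card_eq_card hV0VL).symm
      refine ⟨a, VL, haF, hVLgood, ?_⟩
      rw [← hMdef]
      have hM8 : M.card ≤ 8 := by
        have hsub : M ⊆ (e1 ×ˢ e2).biUnion
            (fun pr => (estar pr.1 pr.2).image
              (fun w => insert pr.1 (insert pr.2 ({w} : Finset α)))) := by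
          intro B hBM
          obtain ⟨x, y, hxe, hye, hxB, hyB, hxy⟩ := hBxy B hBM
          obtain ⟨g, hBeq, hge, _, _⟩ := hthird B hBM x y hxB hyB hxy
          refine Finset.mem_biUnion.2 ⟨(x, y), Finset.mem_product.2 ⟨hxe, hye⟩, ?_⟩
          exact Finset.mem_image.2 ⟨g, hge, hBeq.symm⟩
        refine le_trans (Finset.card_le_card hsub) (le_trans Finset.card_biUnion_le ?_)
        have hbound := Finset.sum_le_card_nsmul (e1 ×ˢ e2)
          (fun pr => ((estar pr.1 pr.2).image
            (fun w => insert pr.1 (insert pr.2 ({w} : Finset α)))).card) 2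
          (by
            intro pr _
            refine le_trans Finset.card_image_le ?_
            rw [(hLaprop _ (hestar pr.1 pr.2).1).1])
        rw [Finset.card_product, (hLaprop e1 he1).1, (hLaprop e2 he2).1] at hbound
        simpa using hbound
      by_cases hz3 : 3 ≤ Z.card
      · omega
      · by_cases he3 : ∃ e3 ∈ La, ∀ w ∈ e3, w ∉ V0
        · -- a third disjoint edge exists
          obtain ⟨e3, he3m, he3d⟩ := he3
          obtain ⟨t1, t2, ht12, he3eq⟩ := Finset.card_eq_two.1 (hLaprop e3 he3m).1
          have ht1e3 : t1 ∈ e3 := he3eq ▸ Finset.mem_insert_self t1 _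
          have ht2e3 : t2 ∈ e3 := he3eq ▸ Finset.mem_insert_of_mem (Finset.mem_singleton_self t2)
          have ht1V0 : t1 ∉ V0 := he3d t1 ht1e3
          have ht2V0 : t2 ∉ V0 := he3d t2 ht2e3
          have hpV0 : p ∈ V0 := Finset.mem_union_left _ hpe1
          have hqV0 : q ∈ V0 := Finset.mem_union_left _ hqe1
          have hrV0 : r ∈ V0 := Finset.mem_union_right _ hre2
          have hsV0 : s' ∈ V0 := Finset.mem_union_right _ hse2
          have ht1Z : t1 ∈ Z := by
            rw [hZdef, Finset.mem_sdiff]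
            exact ⟨hVLmem t1 e3 he3m ht1e3, ht1V0⟩
          have ht2Z : t2 ∈ Z := by
            rw [hZdef, Finset.mem_sdiff]
            exact ⟨hVLmem t2 e3 he3m ht2e3, ht2V0⟩
          have hZ2 : Z.card = 2 := by
            have hsub : ({t1, t2} : Finset α) ⊆ Z := by
              intro w hw
              rcases Finset.mem_insert.1 hw with h | h
              · exact h ▸ ht1Z
              · exact (Finset.mem_singleton.1 h) ▸ ht2Z
            have := Finset.card_le_card hsub
            rw [Finset.card_insert_of_notMem (by simpa using ht12),
              Finset.card_singleton] at this
            omega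
          -- show M.card ≤ 7 by contradiction
          by_contra hcon
          push_neg at hcon
          have hM8' : 8 ≤ M.card := by omega
          have hsplit : (M.filter (fun B => p ∈ B)).card +
              (M.filter (fun B => p ∉ B)).card = M.card :=
            Finset.card_filter_add_card_filter_not _
          -- M.filter (p ∈ ·) ⊆ S1
          have honeside : ∀ (z z' : α), z ∈ e1 → (∀ B, B ∈ M → z' ∈ B → z ∈ B) →
              M.filter (fun B => z ∈ B) ⊆ (e2 ×ˢ e3).image
                (fun yz => ({z, yz.1, yz.2} : Finset α)) := by
            intro z z' hze1 _ B hB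
            rw [Finset.mem_filter] at hB
            obtain ⟨hBM, hzB⟩ := hB
            obtain ⟨hBF, hBa⟩ := hMprop B hBM
            obtain ⟨y, hye, hyB⟩ := hBcov B hBF hBa e2 he2
            obtain ⟨g, hge, hgB⟩ := hBcov B hBF hBa e3 he3m
            have hzy : z ≠ y := fun h => (Finset.disjoint_left.1 hdisj12 hze1) (h ▸ hye)
            have hzg : z ≠ g := fun h =>
              he3d g hge (h ▸ (Finset.mem_union_left _ hze1))
            have hyg : y ≠ g := fun h =>
              he3d g hge (h ▸ (Finset.mem_union_right _ hye))
            have hsub3 : ({z, y, g} : Finset α) ⊆ B := by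
              intro w hw
              rcases Finset.mem_insert.1 hw with h | h
              · exact h ▸ hzB
              rcases Finset.mem_insert.1 h with h | h
              · exact h ▸ hyB
              · exact (Finset.mem_singleton.1 h) ▸ hgB
            have hcard3 : ({z, y, g} : Finset α).card = 3 :=
              Finset.card_eq_three.2 ⟨z, y, g, hzy, hzg, hyg, rfl⟩
            have hBeq : B = {z, y, g} :=
              (Finset.eq_of_subset_of_card_le hsub3 (by rw [hc3 B hBF, hcard3])).symm
            exact Finset.mem_image.2 ⟨(y, g), Finset.mem_product.2 ⟨hye, hge⟩, hBeq.symm⟩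
          have hprodcard : ((e2 ×ˢ e3)).card = 4 := by
            rw [Finset.card_product, (hLaprop e2 he2).1, (hLaprop e3 he3m).1]
          have hq_of_notp : ∀ B, B ∈ M → p ∉ B → q ∈ B := by
            intro B hBM hpB
            obtain ⟨hBF, hBa⟩ := hMprop B hBM
            obtain ⟨w, hwe, hwB⟩ := hBcov B hBF hBa e1 he1
            have : w ∈ ({p, q} : Finset α) := he1eq ▸ hwe
            rcases Finset.mem_insert.1 this with h | h
            · exact absurd (h ▸ hwB) hpB
            · exact (Finset.mem_singleton.1 h) ▸ hwB
          have hsubp := honeside p p hpe1 (fun B _ h => h)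
          have hsubq : M.filter (fun B => p ∉ B) ⊆ (e2 ×ˢ e3).image
              (fun yz => ({q, yz.1, yz.2} : Finset α)) := by
            intro B hB
            rw [Finset.mem_filter] at hB
            obtain ⟨hBM, hpB⟩ := hB
            exact honeside q q hqe1 (fun B _ h => h)
              (Finset.mem_filter.2 ⟨hBM, hq_of_notp B hBM hpB⟩)
          have hc1 : (M.filter (fun B => p ∈ B)).card ≤ 4 := by
            refine le_trans (Finset.card_le_card hsubp) (le_trans Finset.card_image_le ?_)
            rw [hprodcard]
          have hc2 : (M.filter (fun B => p ∉ B)).card ≤ 4 := by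
            refine le_trans (Finset.card_le_card hsubq) (le_trans Finset.card_image_le ?_)
            rw [hprodcard]
          have hceq1 : (M.filter (fun B => p ∈ B)).card = 4 := by omega
          have hceq2 : (M.filter (fun B => p ∉ B)).card = 4 := by omega
          -- both images coincide with the filters
          have himg1 : M.filter (fun B => p ∈ B) = (e2 ×ˢ e3).image
              (fun yz => ({p, yz.1, yz.2} : Finset α)) := by
            apply Finset.eq_of_subset_of_card_le hsubp
            refine le_trans (le_trans Finset.card_image_le (le_of_eq hprodcard)) ?_
            rw [hceq1]
          have himg2 : M.filter (fun B => p ∉ B) = (e2 ×ˢ e3).image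
              (fun yz => ({q, yz.1, yz.2} : Finset α)) := by
            apply Finset.eq_of_subset_of_card_le hsubq
            refine le_trans (le_trans Finset.card_image_le (le_of_eq hprodcard)) ?_
            rw [hceq2]
          have hB1mem : ({p, r, t1} : Finset α) ∈ M := by
            have : ({p, r, t1} : Finset α) ∈ M.filter (fun B => p ∈ B) := by
              rw [himg1]
              exact Finset.mem_image.2 ⟨(r, t1), Finset.mem_product.2 ⟨hre2, ht1e3⟩, rfl⟩
            exact (Finset.mem_filter.1 this).1
          have hB2mem : ({q, s', t2} : Finset α) ∈ M := by
            have : ({q, s', t2} : Finset α) ∈ M.filter (fun B => p ∉ B) := by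
              rw [himg2]
              exact Finset.mem_image.2 ⟨(s', t2), Finset.mem_product.2 ⟨hse2, ht2e3⟩, rfl⟩
            exact (Finset.mem_filter.1 this).1
          obtain ⟨w, hw1, hw2⟩ := inter_elt hF (hMprop _ hB1mem).1 (hMprop _ hB2mem).1
          have hwq : w ≠ q := by
            rintro rfl
            rcases Finset.mem_insert.1 hw1 with h | h
            · exact hpq h.symm
            rcases Finset.mem_insert.1 h with h | h
            · exact hqe2 (h ▸ hre2)
            · exact ht1V0 ((Finset.mem_singleton.1 h) ▸ hqV0)
          have hws : w ≠ s' := by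
            rintro rfl
            rcases Finset.mem_insert.1 hw1 with h | h
            · exact hpe2 (h ▸ hse2)
            rcases Finset.mem_insert.1 h with h | h
            · exact hrs h.symm
            · exact ht1V0 ((Finset.mem_singleton.1 h) ▸ hsV0)
          have hwt2 : w ≠ t2 := by
            rintro rfl
            rcases Finset.mem_insert.1 hw1 with h | h
            · exact ht2V0 (h ▸ hpV0)
            rcases Finset.mem_insert.1 h with h | h
            · exact ht2V0 (h ▸ hrV0)
            · exact ht12 (Finset.mem_singleton.1 h).symm
          rcases Finset.mem_insert.1 hw2 with h | h
          · exact hwq h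
          rcases Finset.mem_insert.1 h with h | h
          · exact hws h
          · exact hwt2 (Finset.mem_singleton.1 h)
        · -- every link edge meets V0
          push_neg at he3
          have hZle : Z.card ≤ 2 := by omega
          by_cases hZ0 : Z.card = 0
          · have hVLeq : VL.card = 4 := by omega
            have hMsub : M ⊆ Finset.powersetCard 3 VL := by
              intro B hBM
              exact Finset.mem_powersetCard.2 ⟨hBVL B hBM, hc3 B (hMprop B hBM).1⟩
            have hh := Finset.card_le_card hMsub
            rw [Finset.card_powersetCard, hVLeq] at hh
            have h43 : Nat.choose 4 3 = 4 := by decide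
            omega
          by_cases hZ1 : Z.card = 1
          · have hVL5 : VL.card = 5 := by omega
            have hf1 := hestar p r
            have hf2 := hestar q s'
            obtain ⟨w1, hw1f1, hw1V0⟩ := he3 (estar p r) hf1.1
            have hw1qs : w1 = q ∨ w1 = s' := by
              rw [hV0def] at hw1V0
              rcases Finset.mem_union.1 hw1V0 with h | h
              · have : w1 ∈ ({p, q} : Finset α) := he1eq ▸ h
                rcases Finset.mem_insert.1 this with h' | h'
                · exact absurd (h' ▸ hw1f1) hf1.2.1
                · exact Or.inl (Finset.mem_singleton.1 h')
              · have : w1 ∈ ({r, s'} : Finset α) := he2eq ▸ h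
                rcases Finset.mem_insert.1 this with h' | h'
                · exact absurd (h' ▸ hw1f1) hf1.2.2
                · exact Or.inr (Finset.mem_singleton.1 h')
            have hw1f2 : w1 ∉ estar q s' := by
              rcases hw1qs with h | h
              · exact h ▸ hf2.2.1
              · exact h ▸ hf2.2.2
            have he1f1 : e1 ≠ estar p r := fun h => hf1.2.1 (h ▸ hpe1)
            have he1f2 : e1 ≠ estar q s' := fun h => hf2.2.1 (h ▸ hqe1)
            have he2f1 : e2 ≠ estar p r := fun h => hf1.2.2 (h ▸ hre2)
            have he2f2 : e2 ≠ estar q s' := fun h => hf2.2.2 (h ▸ hse2)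
            have he12 : e1 ≠ e2 := fun h => hpe2 (h ▸ hpe1)
            have hf12 : estar p r ≠ estar q s' := fun h => hw1f2 (h ▸ hw1f1)
            have hsubL : ({e1, e2, estar p r, estar q s'} : Finset (Finset α)) ⊆ La := by
              intro e he
              rcases Finset.mem_insert.1 he with h | h
              · exact h ▸ he1
              rcases Finset.mem_insert.1 h with h | h
              · exact h ▸ he2
              rcases Finset.mem_insert.1 h with h | h
              · exact h ▸ hf1.1
              · exact (Finset.mem_singleton.1 h) ▸ hf2.1
            have hcard4 : ({e1, e2, estar p r, estar q s'} : Finset (Finset α)).card = 4 := by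
              rw [Finset.card_insert_of_notMem (by
                simp only [Finset.mem_insert, Finset.mem_singleton]
                push_neg
                exact ⟨he12, he1f1, he1f2⟩),
                Finset.card_insert_of_notMem (by
                  simp only [Finset.mem_insert, Finset.mem_singleton]
                  push_neg
                  exact ⟨he2f1, he2f2⟩),
                Finset.card_insert_of_notMem (by simpa using hf12),
                Finset.card_singleton]
            have hLage4 : 4 ≤ La.card := hcard4 ▸ Finset.card_le_card hsubL
            have hXsub : La.image (fun e => VL \ e) ⊆ Finset.powersetCard 3 VL := by
              intro S hS
              obtain ⟨e, he, heq⟩ := Finset.mem_image.1 hS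
              refine Finset.mem_powersetCard.2 ⟨by rw [← heq]; exact Finset.sdiff_subset, ?_⟩
              rw [← heq, Finset.card_sdiff_of_subset (hedgeVL e he), hVL5, (hLaprop e he).1]
            have hXcard : (La.image (fun e => VL \ e)).card = La.card := by
              apply Finset.card_image_of_injOn
              intro e he e' he' heq
              rw [Finset.mem_coe] at he he'
              have heq' : VL \ e = VL \ e' := heq
              calc e = VL \ (VL \ e) := (Finset.sdiff_sdiff_eq_self (hedgeVL e he)).symm
                _ = VL \ (VL \ e') := by rw [heq']
                _ = e' := Finset.sdiff_sdiff_eq_self (hedgeVL e' he')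
            have hMX : Disjoint M (La.image (fun e => VL \ e)) := by
              rw [Finset.disjoint_left]
              intro B hBM hBX
              obtain ⟨e, he, heq⟩ := Finset.mem_image.1 hBX
              obtain ⟨hBF, hBa⟩ := hMprop B hBM
              obtain ⟨w, hwe, hwB⟩ := hBcov B hBF hBa e he
              rw [← heq] at hwB
              exact (Finset.mem_sdiff.1 hwB).2 hwe
            have hMsub : M ⊆ Finset.powersetCard 3 VL := by
              intro B hBM
              exact Finset.mem_powersetCard.2 ⟨hBVL B hBM, hc3 B (hMprop B hBM).1⟩
            have hUcard := Finset.card_le_card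
              (Finset.union_subset hMsub hXsub)
            rw [Finset.card_union_of_disjoint hMX, Finset.card_powersetCard, hVL5] at hUcard
            have h53 : Nat.choose 5 3 = 10 := by decide
            omega
          · -- Z.card = 2
            have hZ2 : Z.card = 2 := by omega
            obtain ⟨z1, z2, hz12, hZeq⟩ := Finset.card_eq_two.1 hZ2
            have hz1Z : z1 ∈ Z := hZeq ▸ Finset.mem_insert_self z1 _
            have hz2Z : z2 ∈ Z := hZeq ▸ Finset.mem_insert_of_mem (Finset.mem_singleton_self z2)
            have hzprop : ∀ z ∈ Z, z ∈ VL ∧ z ∉ V0 := by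
              intro z hz
              rw [hZdef, Finset.mem_sdiff] at hz
              exact hz
            have hzeta : ∀ z ∈ Z, ∃ ζ, ζ ∈ V0 ∧ ({z, ζ} : Finset α) ∈ La := by
              intro z hz
              obtain ⟨hzVL, hzV0⟩ := hzprop z hz
              rw [hVLdef] at hzVL
              obtain ⟨e, he, hze⟩ := Finset.mem_biUnion.1 hzVL
              obtain ⟨w, hwe, hwV0⟩ := he3 e he
              obtain ⟨f, hfz, hfeq⟩ := second (hLaprop e he).1 hze
              have hwf : w = f := by
                have : w ∈ ({z, f} : Finset α) := hfeq ▸ hwe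
                rcases Finset.mem_insert.1 this with h | h
                · exact absurd (h ▸ hwV0) hzV0
                · exact Finset.mem_singleton.1 h
              exact ⟨f, hwf ▸ hwV0, hfeq ▸ he⟩
            obtain ⟨ζ1, hζ1V0, hζ1e⟩ := hzeta z1 hz1Z
            obtain ⟨ζ2, hζ2V0, hζ2e⟩ := hzeta z2 hz2Z
            have hMsplit : M ⊆ M.filter (fun B => z1 ∈ B) ∪
                (M.filter (fun B => z2 ∈ B) ∪ M.filter (fun B => z1 ∉ B ∧ z2 ∉ B)) := by
              intro B hB
              by_cases h1 : z1 ∈ B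
              · exact Finset.mem_union_left _ (Finset.mem_filter.2 ⟨hB, h1⟩)
              by_cases h2 : z2 ∈ B
              · exact Finset.mem_union_right _ (Finset.mem_union_left _
                  (Finset.mem_filter.2 ⟨hB, h2⟩))
              · exact Finset.mem_union_right _ (Finset.mem_union_right _
                  (Finset.mem_filter.2 ⟨hB, h1, h2⟩))
            have hM0 : (M.filter (fun B => z1 ∉ B ∧ z2 ∉ B)).card ≤ 3 := by
              have hsub : M.filter (fun B => z1 ∉ B ∧ z2 ∉ B) ⊆
                  (Finset.powersetCard 2 (V0.erase ζ1)).image (fun P => insert ζ1 P) := by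
                intro B hB
                rw [Finset.mem_filter] at hB
                obtain ⟨hBM, hBz1, hBz2⟩ := hB
                obtain ⟨hBF, hBa⟩ := hMprop B hBM
                have hBV0 : B ⊆ V0 := by
                  intro x hx
                  have hxVL := hBVL B hBM hx
                  by_contra hxV0
                  have hxZ : x ∈ Z := by
                    rw [hZdef, Finset.mem_sdiff]
                    exact ⟨hxVL, hxV0⟩
                  rw [hZeq] at hxZ
                  rcases Finset.mem_insert.1 hxZ with h | h
                  · exact hBz1 (h ▸ hx)
                  · exact hBz2 ((Finset.mem_singleton.1 h) ▸ hx)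
                have hζ1B : ζ1 ∈ B := by
                  obtain ⟨w, hwe, hwB⟩ := hBcov B hBF hBa _ hζ1e
                  rcases Finset.mem_insert.1 hwe with h | h
                  · exact absurd (h ▸ hwB) hBz1
                  · exact (Finset.mem_singleton.1 h) ▸ hwB
                refine Finset.mem_image.2 ⟨B.erase ζ1, ?_, Finset.insert_erase hζ1B⟩
                refine Finset.mem_powersetCard.2 ⟨?_, ?_⟩
                · intro x hx
                  exact Finset.mem_erase.2 ⟨(Finset.mem_erase.1 hx).1,
                    hBV0 (Finset.mem_of_mem_erase hx)⟩
                · rw [Finset.card_erase_of_mem hζ1B, hc3 B hBF]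
              refine le_trans (Finset.card_le_card hsub) (le_trans Finset.card_image_le ?_)
              rw [Finset.card_powersetCard, Finset.card_erase_of_mem hζ1V0, hV0card]
              decide
            have hM12 : ∀ (za zb ζb : α), za ∈ Z → zb ∈ Z → za ≠ zb → ζb ∈ V0 →
                ({zb, ζb} : Finset α) ∈ La → (M.filter (fun B => za ∈ B)).card ≤ 2 := by
              intro za zb ζb hzaZ hzbZ hzab hζbV0 hζbe
              have hsub : M.filter (fun B => za ∈ B) ⊆
                  (estar za ζb).image (fun g => ({za, ζb, g} : Finset α)) := by
                intro B hB
                rw [Finset.mem_filter] at hB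
                obtain ⟨hBM, hzaB⟩ := hB
                obtain ⟨hBF, hBa⟩ := hMprop B hBM
                have hzbB : zb ∉ B := by
                  intro hzbB
                  obtain ⟨x, y, hxe, hye, hxB, hyB, hxy⟩ := hBxy B hBM
                  have hxV0 : x ∈ V0 := Finset.mem_union_left _ hxe
                  have hyV0 : y ∈ V0 := Finset.mem_union_right _ hye
                  have hzaV0 := (hzprop za hzaZ).2
                  have hzbV0 := (hzprop zb hzbZ).2
                  have hxza : x ≠ za := fun h => hzaV0 (h ▸ hxV0)
                  have hxzb : x ≠ zb := fun h => hzbV0 (h ▸ hxV0)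
                  have hyza : y ≠ za := fun h => hzaV0 (h ▸ hyV0)
                  have hyzb : y ≠ zb := fun h => hzbV0 (h ▸ hyV0)
                  have hsub4 : ({x, y, za, zb} : Finset α) ⊆ B := by
                    intro w hw
                    rcases Finset.mem_insert.1 hw with h | h
                    · exact h ▸ hxB
                    rcases Finset.mem_insert.1 h with h | h
                    · exact h ▸ hyB
                    rcases Finset.mem_insert.1 h with h | h
                    · exact h ▸ hzaB
                    · exact (Finset.mem_singleton.1 h) ▸ hzbB
                  have hc4 : ({x, y, za, zb} : Finset α).card = 4 := by
                    rw [Finset.card_insert_of_notMem (by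
                      simp only [Finset.mem_insert, Finset.mem_singleton]
                      push_neg
                      exact ⟨hxy, hxza, hxzb⟩),
                      Finset.card_insert_of_notMem (by
                        simp only [Finset.mem_insert, Finset.mem_singleton]
                        push_neg
                        exact ⟨hyza, hyzb⟩),
                      Finset.card_insert_of_notMem (by simpa using hzab),
                      Finset.card_singleton]
                  have hle4 := Finset.card_le_card hsub4
                  rw [hc4, hc3 B hBF] at hle4
                  omega
                have hζbB : ζb ∈ B := by
                  obtain ⟨w, hwe, hwB⟩ := hBcov B hBF hBa _ hζbe
                  rcases Finset.mem_insert.1 hwe with h | h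
                  · exact absurd (h ▸ hwB) hzbB
                  · exact (Finset.mem_singleton.1 h) ▸ hwB
                have hzaζ : za ≠ ζb := fun h => (hzprop za hzaZ).2 (h ▸ hζbV0)
                obtain ⟨g, hBeq, hge, _, _⟩ := hthird B hBM za ζb hzaB hζbB hzaζ
                exact Finset.mem_image.2 ⟨g, hge, hBeq.symm⟩
              refine le_trans (Finset.card_le_card hsub) (le_trans Finset.card_image_le ?_)
              rw [(hLaprop _ (hestar za ζb).1).1]
            have hM1 := hM12 z1 z2 ζ2 hz1Z hz2Z hz12 hζ2V0 hζ2e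
            have hM2 := hM12 z2 z1 ζ1 hz2Z hz1Z hz12.symm hζ1V0 hζ1e
            have hst := Finset.card_le_card hMsplit
            have hu1 := Finset.card_union_le (M.filter (fun B => z1 ∈ B))
              ((M.filter (fun B => z2 ∈ B)) ∪ (M.filter (fun B => z1 ∉ B ∧ z2 ∉ B)))
            have hu2 := Finset.card_union_le (M.filter (fun B => z2 ∈ B))
              (M.filter (fun B => z1 ∉ B ∧ z2 ∉ B))
            omega

lemma main_core (hne : F.Nonempty)
    (hF : ∀ A ∈ F, ∀ B ∈ F, (A ∩ B).Nonempty)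
    (h3 : ∀ B ∈ F, B.card ≤ 3)
    (hnc : ∀ a : α, ∃ B ∈ F, a ∉ B)
    (hns : ∀ u : α, ({u} : Finset α) ∉ F)
    (hm2 : ∀ a : α, (∃ A ∈ F, a ∈ A) → 2 ≤ (F.filter (fun B => a ∉ B)).card) :
    Sterb F := by
  classical
  have h23 : ∀ B ∈ F, B.card = 2 ∨ B.card = 3 := by
    intro B hB
    have h1 : B.Nonempty := by
      obtain ⟨w, hw, _⟩ := inter_elt hF hB hB
      exact ⟨w, hw⟩
    have h2 : B.card ≠ 1 := by
      intro h
      obtain ⟨u, hu⟩ := Finset.card_eq_one.1 h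
      exact hns u (hu ▸ hB)
    have := h3 B hB
    have := Finset.card_pos.2 h1
    omega
  by_cases hGe : ∃ e ∈ F, e.card = 2
  · obtain ⟨e0, he0, he0c⟩ := hGe
    obtain ⟨x, y, hxy, hexy⟩ := Finset.card_eq_two.1 he0c
    subst hexy
    by_cases hG1 : ∀ e ∈ F, e.card = 2 → e = {x, y}
    · exact cover2 hF hnc hm2 x y hxy
        (fun B hB => by
          obtain ⟨w, hw1, hw2⟩ := inter_elt hF hB he0
          rcases Finset.mem_insert.1 hw2 with h | h
          · exact Or.inl (h ▸ hw1)
          · exact Or.inr ((Finset.mem_singleton.1 h) ▸ hw1))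
        hG1 h23
    · push_neg at hG1
      obtain ⟨e1, he1, he1c, he1ne⟩ := hG1
      -- e1 shares exactly one vertex with {x,y}
      obtain ⟨w, hw1, hw2⟩ := inter_elt hF he1 he0
      obtain ⟨u2, hu2w, he1eq⟩ := second he1c hw1
      have hu2xy : u2 ∉ ({x, y} : Finset α) := by
        intro hmem
        apply he1ne
        apply Finset.eq_of_subset_of_card_le _ (by
          rw [he1c, Finset.card_insert_of_notMem (by simpa using hxy), Finset.card_singleton])
        rw [he1eq]
        intro t ht
        rcases Finset.mem_insert.1 ht with h | h
        · exact h ▸ hw2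
        · exact (Finset.mem_singleton.1 h) ▸ hmem
      have key : ∀ c u1 : α, c ≠ u1 → c ≠ u2 → ({c, u1} : Finset α) = ({x, y} : Finset α) →
          ({c, u2} : Finset α) ∈ F → Sterb F := by
        intro c u1 hcu1 hcu2 he0eq hce1
        have hu1u2 : u1 ≠ u2 := by
          intro h
          apply hu2xy
          rw [← he0eq, ← h]
          exact Finset.mem_insert_of_mem (Finset.mem_singleton_self u1)
        have hce0 : ({c, u1} : Finset α) ∈ F := by rw [he0eq]; exact he0
        by_cases hG2 : ∀ e ∈ F, e.card = 2 → e = {c, u1} ∨ e = {c, u2}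
        · exact case_P2 hF hm2 c u1 u2 hcu1 hcu2 hu1u2 hce0 hce1 hG2 h23
        · push_neg at hG2
          obtain ⟨e2, he2, he2c, he2n1, he2n2⟩ := hG2
          have hpart : ∀ e ∈ F, e.card = 2 → e = {c, u1} ∨ e = {c, u2} ∨ e = {u1, u2} := by
            intro e he hec
            by_cases hce : c ∈ e
            · obtain ⟨t, htc, heeq⟩ := second hec hce
              by_cases ht1 : t = u1
              · exact Or.inl (by rw [heeq, ht1])
              by_cases ht2 : t = u2
              · exact Or.inr (Or.inl (by rw [heeq, ht2]))
              · exfalso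
                have hcV : ∃ A ∈ F, c ∈ A := ⟨{c, u1}, hce0, Finset.mem_insert_self c _⟩
                have h2c := hm2 c hcV
                obtain ⟨B1, hB1m, B2, hB2m, hB12⟩ := Finset.one_lt_card.1
                  (by omega : 1 < (F.filter (fun B => c ∉ B)).card)
                have hBeq : ∀ B ∈ F.filter (fun B => c ∉ B), B = {u1, u2, t} := by
                  intro B hBm
                  have hBF := (Finset.mem_filter.1 hBm).1
                  have hBc := (Finset.mem_filter.1 hBm).2
                  have hsub : ({u1, u2, t} : Finset α) ⊆ B := by
                    intro s hs
                    rcases Finset.mem_insert.1 hs with h | h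
                    · exact h ▸ partner hF hce0 hBF hBc
                    rcases Finset.mem_insert.1 h with h | h
                    · exact h ▸ partner hF hce1 hBF hBc
                    · rw [Finset.mem_singleton.1 h]
                      exact partner hF (heeq ▸ he) hBF hBc
                  have hcc : ({u1, u2, t} : Finset α).card = 3 :=
                    Finset.card_eq_three.2 ⟨u1, u2, t, hu1u2,
                      fun h => ht1 h.symm, fun h => ht2 h.symm, rfl⟩
                  rcases h23 B hBF with h | h
                  · exact absurd (Finset.card_le_card hsub) (by omega)
                  · exact (Finset.eq_of_subset_of_card_le hsub (by omega)).symm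
                exact hB12 ((hBeq B1 hB1m).trans (hBeq B2 hB2m).symm)
            · right; right
              obtain ⟨w1, hw11, hw12⟩ := inter_elt hF he hce0
              obtain ⟨w2, hw21, hw22⟩ := inter_elt hF he hce1
              have hw1u : w1 = u1 := by
                rcases Finset.mem_insert.1 hw12 with h | h
                · exact absurd (h ▸ hw11) hce
                · exact Finset.mem_singleton.1 h
              have hw2u : w2 = u2 := by
                rcases Finset.mem_insert.1 hw22 with h | h
                · exact absurd (h ▸ hw21) hce
                · exact Finset.mem_singleton.1 h
              have hsub : ({u1, u2} : Finset α) ⊆ e := by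
                intro s hs
                rcases Finset.mem_insert.1 hs with h | h
                · exact h ▸ (hw1u ▸ hw11)
                · exact (Finset.mem_singleton.1 h) ▸ (hw2u ▸ hw21)
              exact (Finset.eq_of_subset_of_card_le hsub (by
                rw [hec, Finset.card_insert_of_notMem (by simpa using hu1u2),
                  Finset.card_singleton])).symm
          have heu12 : ({u1, u2} : Finset α) ∈ F := by
            rcases hpart e2 he2 he2c with h | h | h
            · exact absurd h he2n1
            · exact absurd h he2n2
            · exact h ▸ he2
          rcases le_total ((F.filter (fun B => c ∉ B ∧ B.card = 3)).card)
              ((F.filter (fun B => u1 ∉ B ∧ B.card = 3)).card) with h | h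
          · refine tri_final hF c u1 u2 hcu1 hcu2 hu1u2 hce0 heu12 hce1 ?_ h23 h
            intro e he hec
            rcases hpart e he hec with h1 | h1 | h1
            · exact Or.inl h1
            · exact Or.inr (Or.inr h1)
            · exact Or.inr (Or.inl h1)
          · refine tri_final hF u1 c u2 (Ne.symm hcu1) hu1u2 hcu2
              (by rw [Finset.pair_comm]; exact hce0) hce1 heu12 ?_ h23 h
            intro e he hec
            rcases hpart e he hec with h1 | h1 | h1
            · exact Or.inl (by rw [h1, Finset.pair_comm])
            · exact Or.inr (Or.inl h1)
            · exact Or.inr (Or.inr h1)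
      rcases Finset.mem_insert.1 hw2 with h | h
      · refine key w y ?_ (Ne.symm hu2w) ?_ (he1eq ▸ he1)
        · rw [h]; exact hxy
        · rw [h]
      · rw [Finset.mem_singleton] at h
        refine key w x ?_ (Ne.symm hu2w) ?_ (he1eq ▸ he1)
        · rw [h]; exact hxy.symm
        · rw [h, Finset.pair_comm]
  · -- no 2-element members: all have card 3
    push_neg at hGe
    have hc3 : ∀ B ∈ F, B.card = 3 := by
      intro B hB
      rcases h23 B hB with h | h
      · exact absurd h (hGe B hB)
      · exact h
    by_cases hcov2 : ∃ x y : α, x ≠ y ∧ ∀ B ∈ F, x ∈ B ∨ y ∈ B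
    · obtain ⟨x, y, hxy, hcov⟩ := hcov2
      exact cover2 hF hnc hm2 x y hxy hcov
        (fun e he hec => absurd hec (hGe e he)) h23
    · push_neg at hcov2
      apply case_A3 hne hF hm2 hc3
      intro u v
      by_cases huv : u = v
      · obtain ⟨B, hB, hBu⟩ := hnc u
        exact ⟨B, hB, hBu, huv ▸ hBu⟩
      · exact hcov2 u v huv

end Cases

/-- Sterboul: Chvátal's conjecture for rank at most 3. -/
theorem stmt_3' {F : Finset (Finset α)}
    (hne : F.Nonempty)
    (hF : ∀ A ∈ F, ∀ B ∈ F, (A ∩ B).Nonempty)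
    (h3 : ∀ B ∈ F, B.card ≤ 3) :
    ∃ a : α, ({a} : Finset α) ∈ F.biUnion Finset.powerset ∧
      F.card ≤ ((F.biUnion Finset.powerset).filter (fun B => a ∈ B)).card := by
  classical
  by_cases hcom : ∃ a : α, ∀ B ∈ F, a ∈ B
  · obtain ⟨a, ha⟩ := hcom
    obtain ⟨A0, hA0⟩ := hne
    have hmemC : ∀ S : Finset α, (∃ A ∈ F, S ⊆ A) → S ∈ F.biUnion Finset.powerset := by
      intro S ⟨A, hA, hSA⟩
      exact Finset.mem_biUnion.2 ⟨A, hA, Finset.mem_powerset.2 hSA⟩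
    refine ⟨a, hmemC _ ⟨A0, hA0, Finset.singleton_subset_iff.2 (ha A0 hA0)⟩, ?_⟩
    apply Finset.card_le_card
    intro B hB
    exact Finset.mem_filter.2 ⟨hmemC _ ⟨B, hB, le_refl B⟩, ha B hB⟩
  · push_neg at hcom
    have hns : ∀ u : α, ({u} : Finset α) ∉ F := by
      intro u hu
      obtain ⟨B, hB, hBu⟩ := hcom u
      exact hBu (partner hF (show ({u, u} : Finset α) ∈ F by simpa using hu) hB hBu)
    by_cases hm1 : ∃ a : α, (∃ A ∈ F, a ∈ A) ∧ (F.filter (fun B => a ∉ B)).card ≤ 1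
    · obtain ⟨a, haV, hac⟩ := hm1
      exact sterb_suffices hns ⟨a, ∅, haV, by simp, by simpa using hac⟩
    · push_neg at hm1
      exact sterb_suffices hns (main_core hne hF h3 hcom hns (fun a ha => hm1 a ha))

end SterboulProof

/-- Sterboul: Chvátal's conjecture for rank at most 3. -/
theorem stmt_3 {α : Type*} [DecidableEq α] (F : Finset (Finset α))
    (hne : F.Nonempty)
    (hF : ∀ A ∈ F, ∀ B ∈ F, (A ∩ B).Nonempty)
    (h3 : ∀ B ∈ F, B.card ≤ 3) :
    let C : Finset (Finset α) := F.biUnion Finset.powerset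
    ∃ a : α, {a} ∈ C ∧ F.card ≤ (C.filter (fun B => a ∈ B)).card :=
  SterboulProof.stmt_3' hne hF h3
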